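/- arXiv:1109.3641 — 7 statements merged into one kernel-verified Lean document; each statement's English description precedes it below -/
import Mathlib

section
/- An ascent sequence avoids the pattern 10 if and only if it is weakly increasing, and the number of ascent sequences of length n avoiding 10 is 2^{n-1}. -/
/-- Number of ascents (adjacent strict rises) in a list of naturals. -/
def ascList (l : List ℕ) : ℕ :=
  (l.zip l.tail).countP (fun p => decide (p.1 < p.2))

/-- `l` is an ascent sequence: nonempty, starts with 0, and each later letter is at most
one more than the number of ascents in the preceding prefix. -/
def IsAscSeq (l : List ℕ) : Prop :=
  l ≠ [] ∧ l.getD 0 0 = 0 ∧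
    ∀ i, 0 < i → i < l.length → l.getD i 0 ≤ ascList (l.take i) + 1

/-- A sequence contains the pattern 10. -/
def Contains10 (l : List ℕ) : Prop :=
  ∃ i j, i < j ∧ j < l.length ∧ l.getD j 0 < l.getD i 0

lemma ascList_cons_cons (a b : ℕ) (l : List ℕ) :
    ascList (a :: b :: l) = ascList (b :: l) + (if a < b then 1 else 0) := by
  simp [ascList, List.countP_cons]

lemma ascList_concat (l : List ℕ) (x a : ℕ) :
    ascList (l ++ [x, a]) = ascList (l ++ [x]) + (if x < a then 1 else 0) := by
  induction l with
  | nil => simp [ascList, List.countP_cons]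
  | cons y l ih =>
    cases l with
    | nil =>
      simp only [List.nil_append, List.cons_append]
      rw [ascList_cons_cons, ascList_cons_cons y x, ascList_cons_cons x a]
      simp [ascList]; ring
    | cons z l =>
      simp only [List.cons_append] at ih ⊢
      rw [ascList_cons_cons, ascList_cons_cons y z (l ++ [x]), ih]
      ring

/-- Step sequences: each entry is the previous or previous+1. -/
def StepProp (l : List ℕ) : Prop :=
  ∀ i, i + 1 < l.length → l.getD (i+1) 0 = l.getD i 0 ∨ l.getD (i+1) 0 = l.getD i 0 + 1

lemma take_succ_eq (l : List ℕ) (i : ℕ) (hi : i < l.length) :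
    l.take (i+1) = l.take i ++ [l.getD i 0] := by
  rw [List.take_succ, List.getD_eq_getElem l 0 hi]
  simp [List.getElem?_eq_getElem hi]

lemma ascList_take_of_step (l : List ℕ) (h0 : l.getD 0 0 = 0) (hs : StepProp l) :
    ∀ i, i < l.length → ascList (l.take (i+1)) = l.getD i 0 := by
  intro i
  induction i with
  | zero =>
    intro hi
    rw [take_succ_eq l 0 hi, h0]
    rfl
  | succ i ih =>
    intro hi
    have hi' : i < l.length := by omega
    rw [take_succ_eq l (i+1) hi, take_succ_eq l i hi', List.append_assoc]
    rw [show [l.getD i 0] ++ [l.getD (i+1) 0] = [l.getD i 0, l.getD (i+1) 0] from rfl]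
    rw [ascList_concat]
    rw [← take_succ_eq l i hi', ih hi']
    rcases hs i hi with h | h
    · rw [h]; simp
    · rw [h]; simp

lemma mono_of_step (l : List ℕ) (hs : StepProp l) :
    ∀ i j, i ≤ j → j < l.length → l.getD i 0 ≤ l.getD j 0 := by
  intro i j hij hj
  induction j with
  | zero =>
    have : i = 0 := by omega
    rw [this]
  | succ j ih =>
    rcases Nat.eq_or_lt_of_le hij with h | h
    · rw [h]
    · have h1 : l.getD i 0 ≤ l.getD j 0 := ih (by omega) (by omega)
      rcases hs j hj with h2 | h2 <;> omega

lemma avoid_iff_sorted (l : List ℕ) :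
    ¬ Contains10 l ↔ l.Pairwise (· ≤ ·) := by
  rw [List.pairwise_iff_getElem]
  constructor
  · intro h i j hi hj hij
    by_contra hlt
    exact h ⟨i, j, hij, hj, by
      rw [List.getD_eq_getElem l 0 hi, List.getD_eq_getElem l 0 hj]; omega⟩
  · rintro h ⟨i, j, hij, hj, hlt⟩
    have hi : i < l.length := by omega
    rw [List.getD_eq_getElem l 0 hi, List.getD_eq_getElem l 0 hj] at hlt
    exact absurd (h i j hi hj hij) (by omega)

lemma sorted_of_step (l : List ℕ) (hs : StepProp l) : l.Pairwise (· ≤ ·) := by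
  rw [List.pairwise_iff_getElem]
  intro i j hi hj hij
  have := mono_of_step l hs i j (by omega) hj
  rwa [List.getD_eq_getElem l 0 hi, List.getD_eq_getElem l 0 hj] at this

lemma isAscSeq_of_step (l : List ℕ) (hne : l ≠ []) (h0 : l.getD 0 0 = 0)
    (hs : StepProp l) : IsAscSeq l := by
  refine ⟨hne, h0, fun i hi hil => ?_⟩
  obtain ⟨i, rfl⟩ : ∃ j, i = j + 1 := ⟨i - 1, by omega⟩
  rw [ascList_take_of_step l h0 hs i (by omega)]
  rcases hs i hil with h | h <;> omega

lemma ascList_take_le (l : List ℕ) (h0 : l.getD 0 0 = 0)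
    (hsort : ∀ i, i + 1 < l.length → l.getD i 0 ≤ l.getD (i+1) 0) :
    ∀ i, i < l.length → ascList (l.take (i+1)) ≤ l.getD i 0 := by
  intro i
  induction i with
  | zero =>
    intro hi
    rw [take_succ_eq l 0 hi]
    exact Nat.zero_le _
  | succ i ih =>
    intro hi
    have hi' : i < l.length := by omega
    rw [take_succ_eq l (i+1) hi, take_succ_eq l i hi', List.append_assoc]
    rw [show [l.getD i 0] ++ [l.getD (i+1) 0] = [l.getD i 0, l.getD (i+1) 0] from rfl]
    rw [ascList_concat, ← take_succ_eq l i hi']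
    have h1 := ih hi'
    have h2 := hsort i hi
    split <;> omega

lemma step_of_asc_sorted (l : List ℕ) (ha : IsAscSeq l) (hsort : l.Pairwise (· ≤ ·)) :
    StepProp l := by
  obtain ⟨hne, h0, hcond⟩ := ha
  have hadj : ∀ i, i + 1 < l.length → l.getD i 0 ≤ l.getD (i+1) 0 := by
    intro i hi
    rw [List.pairwise_iff_getElem] at hsort
    have := hsort i (i+1) (by omega) hi (by omega)
    rw [List.getD_eq_getElem l 0 (by omega : i < l.length), List.getD_eq_getElem l 0 hi]
    exact this
  intro i hi
  have h1 := hadj i hi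
  have h2 := hcond (i+1) (by omega) hi
  have h3 := ascList_take_le l h0 hadj i (by omega)
  omega

/-- Build a step sequence from a starting value and a list of increments. -/
def build (x : ℕ) : List Bool → List ℕ
  | [] => [x]
  | b :: bs => x :: build (if b then x+1 else x) bs

lemma build_head (x : ℕ) (bs : List Bool) : (build x bs).getD 0 0 = x := by
  cases bs <;> rfl

lemma build_length (x : ℕ) (bs : List Bool) : (build x bs).length = bs.length + 1 := by
  induction bs generalizing x with
  | nil => rfl
  | cons b bs ih => simp [build, ih]

lemma build_step (x : ℕ) (bs : List Bool) : StepProp (build x bs) := by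
  induction bs generalizing x with
  | nil => intro i hi; simp [build] at hi
  | cons b bs ih =>
    intro i hi
    cases i with
    | zero =>
      show (build x (b :: bs)).getD 1 0 = _ ∨ _
      have : (build x (b :: bs)).getD 1 0 = (build (if b then x+1 else x) bs).getD 0 0 := rfl
      rw [this, build_head]
      have hx : (build x (b :: bs)).getD 0 0 = x := build_head x (b :: bs)
      rw [hx]
      cases b <;> simp
    | succ i =>
      have h1 : (build x (b :: bs)).getD (i+2) 0 = (build (if b then x+1 else x) bs).getD (i+1) 0 := rfl
      have h2 : (build x (b :: bs)).getD (i+1) 0 = (build (if b then x+1 else x) bs).getD i 0 := rfl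
      rw [h1, h2]
      apply ih
      simp only [build, List.length_cons] at hi ⊢
      omega

lemma build_injective (x : ℕ) : Function.Injective (build x) := by
  intro bs bs' h
  induction bs generalizing x bs' with
  | nil =>
    cases bs' with
    | nil => rfl
    | cons b' bs' =>
      have := congrArg List.length h
      rw [build_length, build_length] at this
      simp at this
  | cons b bs ih =>
    cases bs' with
    | nil =>
      have := congrArg List.length h
      rw [build_length, build_length] at this
      simp at this
    | cons b' bs' =>
      simp only [build, List.cons.injEq] at h
      obtain ⟨-, htl⟩ := h
      have hh : (if b then x+1 else x) = (if b' then x+1 else x) := by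
        have h2 := congrArg (fun t => List.getD t 0 0) htl
        simp only [build_head] at h2
        exact h2
      have hb : b = b' := by cases b <;> cases b' <;> simp_all
      subst hb
      rw [ih _ htl]

lemma exists_build (l : List ℕ) (hne : l ≠ []) (hs : StepProp l) :
    ∃ bs, l = build (l.getD 0 0) bs := by
  induction l with
  | nil => exact absurd rfl hne
  | cons x l ih =>
    cases l with
    | nil => exact ⟨[], rfl⟩
    | cons y l =>
      have hs' : StepProp (y :: l) := by
        intro i hi
        have := hs (i+1) (by simpa using Nat.succ_lt_succ hi)
        simpa using this
      obtain ⟨bs, hbs⟩ := ih (by simp) hs'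
      simp only [List.getD_cons_zero] at hbs
      have hy : y = x ∨ y = x + 1 := by
        have := hs 0 (by simp)
        simpa using this
      rcases hy with rfl | rfl
      · exact ⟨false :: bs, by simp [build, ← hbs]⟩
      · exact ⟨true :: bs, by simp [build, ← hbs]⟩

lemma ncard_bool_lists (m : ℕ) : {bs : List Bool | bs.length = m}.ncard = 2 ^ m := by
  have h : {bs : List Bool | bs.length = m} = Set.range (List.ofFn : (Fin m → Bool) → List Bool) := by
    ext bs
    simp only [Set.mem_setOf_eq, Set.mem_range]
    constructor
    · rintro rfl
      exact ⟨fun i => bs[i], List.ofFn_getElem⟩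
    · rintro ⟨f, rfl⟩
      simp
  rw [h, ← Set.image_univ, Set.ncard_image_of_injective _ List.ofFn_injective,
    Set.ncard_univ, Nat.card_eq_fintype_card, Fintype.card_fun, Fintype.card_bool,
    Fintype.card_fin]

/-- An ascent sequence avoids 10 iff it is weakly increasing, and there are `2^(n-1)`
ascent sequences of length `n` avoiding 10. -/
theorem stmt2 (n : ℕ) (hn : 1 ≤ n) :
    (∀ l : List ℕ, IsAscSeq l → (¬ Contains10 l ↔ l.Pairwise (· ≤ ·))) ∧
    {l : List ℕ | l.length = n ∧ IsAscSeq l ∧ ¬ Contains10 l}.ncard = 2 ^ (n - 1) := by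
  refine ⟨fun l _ => avoid_iff_sorted l, ?_⟩
  have hset : {l : List ℕ | l.length = n ∧ IsAscSeq l ∧ ¬ Contains10 l} =
      build 0 '' {bs : List Bool | bs.length = n - 1} := by
    ext l
    simp only [Set.mem_setOf_eq, Set.mem_image]
    constructor
    · rintro ⟨hlen, ha, hav⟩
      have hsort := (avoid_iff_sorted l).mp hav
      have hs := step_of_asc_sorted l ha hsort
      obtain ⟨bs, hbs⟩ := exists_build l ha.1 hs
      rw [ha.2.1] at hbs
      have hbl : bs.length = n - 1 := by
        have := congrArg List.length hbs
        rw [build_length] at this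
        omega
      exact ⟨bs, hbl, hbs.symm⟩
    · rintro ⟨bs, hbl, rfl⟩
      have hne : build 0 bs ≠ [] := by
        intro h
        have := congrArg List.length h
        rw [build_length] at this
        simp at this
      have h0 : (build 0 bs).getD 0 0 = 0 := build_head 0 _
      have hs := build_step 0 bs
      refine ⟨?_, isAscSeq_of_step _ hne h0 hs, (avoid_iff_sorted _).mpr (sorted_of_step _ hs)⟩
      rw [build_length, hbl]
      omega
  rw [hset, Set.ncard_image_of_injective _ (build_injective 0), ncard_bool_lists]
end

section
/- The number of ascent sequences of length n avoiding the pattern 10 that have exactly k ascents is binomial(n-1, k). -/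
lemma zip_tail_eq (l : List ℕ) :
    l.zip l.tail = (List.range (l.length - 1)).map (fun i => (l.getD i 0, l.getD (i+1) 0)) := by
  apply List.ext_getElem
  · simp [List.length_zip]
  · intro i h1 h2
    simp only [List.getElem_zip, List.getElem_map, List.getElem_range, List.getElem_tail]
    simp only [List.length_zip, List.length_tail] at h1
    rw [List.getD_eq_getElem, List.getD_eq_getElem]

lemma ascList_countP (l : List ℕ) :
    ascList l = (List.range (l.length - 1)).countP
      (fun i => decide (l.getD i 0 < l.getD (i+1) 0)) := by
  rw [ascList, zip_tail_eq, List.countP_map]; rfl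

lemma ascList_take (l : List ℕ) (N : ℕ) (h : N ≤ l.length) :
    ascList (l.take N) = (List.range (N-1)).countP
      (fun i => decide (l.getD i 0 < l.getD (i+1) 0)) := by
  rw [ascList_countP]
  simp only [List.length_take, min_eq_left h]
  apply List.countP_congr
  intro i hi
  simp only [List.mem_range] at hi
  have h1 : i < N := by omega
  have h2 : i + 1 < N := by omega
  rw [List.getD_eq_getElem _ _ (by simp; omega), List.getD_eq_getElem _ _ (by simp; omega),
    List.getElem_take, List.getElem_take,
    ← List.getD_eq_getElem _ _ (by omega), ← List.getD_eq_getElem _ _ (by omega)]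

lemma countP_range_filter (N : ℕ) (p : ℕ → Prop) [DecidablePred p] :
    (List.range N).countP (fun i => decide (p i)) = ((Finset.range N).filter p).card := by
  induction N with
  | zero => simp
  | succ n ih =>
      rw [List.range_succ, List.countP_append, Finset.range_add_one, Finset.filter_insert]
      by_cases h : p n <;> simp [h, ih, Finset.card_insert_of_notMem]

lemma key (l : List ℕ) (hA : IsAscSeq l)
    (hmono : ∀ i j, i < j → j < l.length → l.getD i 0 ≤ l.getD j 0) :
    ∀ i, i < l.length → l.getD i 0 =
      (List.range i).countP (fun j => decide (l.getD j 0 < l.getD (j+1) 0)) := by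
  intro i
  induction i with
  | zero => intro _; simpa using hA.2.1
  | succ i ih =>
      intro hi
      have ih' := ih (by omega)
      have hb := hA.2.2 (i+1) (by omega) hi
      rw [ascList_take l (i+1) (by omega)] at hb
      simp only [Nat.add_sub_cancel] at hb
      rw [← ih'] at hb
      have hm := hmono i (i+1) (by omega) hi
      rw [List.range_succ, List.countP_append, ← ih', List.countP_singleton]
      split_ifs with h'
      · simp only [decide_eq_true_eq] at h'; omega
      · simp only [decide_eq_true_eq] at h'; omega

/-- counting function of a finset -/
def cnt (S : Finset ℕ) (i : ℕ) : ℕ := ((Finset.range i).filter (· ∈ S)).card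

lemma cnt_succ (S : Finset ℕ) (i : ℕ) :
    cnt S (i+1) = cnt S i + if i ∈ S then 1 else 0 := by
  unfold cnt
  rw [Finset.range_add_one, Finset.filter_insert]
  split_ifs with h
  · rw [Finset.card_insert_of_notMem (by simp)]
  · rfl

lemma cnt_mono (S : Finset ℕ) : Monotone (cnt S) := by
  apply monotone_nat_of_le_succ
  intro i
  rw [cnt_succ]
  split_ifs <;> omega

/-- the list built from a finset of ascent positions -/
def gl (N : ℕ) (S : Finset ℕ) : List ℕ := (List.range N).map (cnt S)

lemma gl_length (N : ℕ) (S : Finset ℕ) : (gl N S).length = N := by simp [gl]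

lemma gl_getD (N : ℕ) (S : Finset ℕ) (i : ℕ) (h : i < N) :
    (gl N S).getD i 0 = cnt S i := by
  rw [List.getD_eq_getElem _ _ (by rw [gl_length]; exact h)]
  simp [gl]

lemma gl_ascList_take (N : ℕ) (S : Finset ℕ) (M : ℕ) (hM : M ≤ N) :
    ascList ((gl N S).take M) = cnt S (M - 1) := by
  rw [ascList_take _ M (by rw [gl_length]; exact hM)]
  have h2 : ∀ i ∈ List.range (M-1),
      (decide ((gl N S).getD i 0 < (gl N S).getD (i+1) 0) = true)
        ↔ ((fun i => decide (i ∈ S)) i = true) := by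
    intro i hi
    simp only [List.mem_range] at hi
    simp only [gl_getD N S i (by omega), gl_getD N S (i+1) (by omega),
      decide_eq_true_eq]
    have := cnt_succ S i
    by_cases h : i ∈ S <;> simp [h] at this ⊢ <;> omega
  rw [List.countP_congr h2, countP_range_filter]
  rfl

/-- The number of 10-avoiding ascent sequences of length `n` with exactly `k` ascents
is `(n-1).choose k`. -/
theorem stmt3 (n k : ℕ) (hn : 1 ≤ n) :
    {l : List ℕ | l.length = n ∧ IsAscSeq l ∧ ¬ Contains10 l ∧ ascList l = k}.ncard
      = (n - 1).choose k := by
  have hset : {l : List ℕ | l.length = n ∧ IsAscSeq l ∧ ¬ Contains10 l ∧ ascList l = k}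
      = ↑((((Finset.range (n-1)).powersetCard k)).image (gl n)) := by
    ext l
    simp only [Set.mem_setOf_eq, Finset.coe_image, Set.mem_image, Finset.mem_coe,
      Finset.mem_powersetCard]
    constructor
    · rintro ⟨hlen, hA, h10, hasc⟩
      have hmono : ∀ i j, i < j → j < l.length → l.getD i 0 ≤ l.getD j 0 := by
        intro i j hij hj
        by_contra h
        exact h10 ⟨i, j, hij, hj, by omega⟩
      set S : Finset ℕ := (Finset.range (n-1)).filter
        (fun i => l.getD i 0 < l.getD (i+1) 0) with hS
      have hkey := key l hA hmono
      refine ⟨S, ⟨Finset.filter_subset _ _, ?_⟩, ?_⟩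
      · -- card S = k
        rw [hS, ← countP_range_filter, ← hlen]
        rw [← ascList_countP]; exact hasc
      · -- gl n S = l
        apply List.ext_getElem
        · rw [gl_length, hlen]
        · intro i h1 h2
          rw [gl_length] at h1
          rw [← List.getD_eq_getElem (gl n S) _ (by rw [gl_length]; exact h1),
            ← List.getD_eq_getElem l _ h2, gl_getD n S i h1]
          rw [hkey i (by omega)]
          rw [countP_range_filter, hS]
          unfold cnt
          congr 1
          apply Finset.filter_congr
          intro j hj
          simp only [Finset.mem_range] at hj
          simp only [hS, Finset.mem_filter, Finset.mem_range]
          constructor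
          · intro h; exact h.2
          · intro h; exact ⟨by omega, h⟩
    · rintro ⟨S, ⟨hsub, hcard⟩, rfl⟩
      have hlen := gl_length n S
      have h0 : (0:ℕ) < n := hn
      have hgd : ∀ i, i < n → (gl n S).getD i 0 = cnt S i := fun i hi => gl_getD n S i hi
      have hasc : ascList (gl n S) = k := by
        have ht : (gl n S).take n = gl n S := List.take_of_length_le (by rw [hlen])
        rw [← ht, gl_ascList_take n S n le_rfl]
        rw [← hcard]
        unfold cnt
        rw [Finset.filter_mem_eq_inter, Finset.inter_eq_right.mpr hsub]
      refine ⟨hlen, ⟨?_, ?_, ?_⟩, ?_, hasc⟩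
      · intro h; rw [h] at hlen; simp at hlen; omega
      · rw [hgd 0 h0]; simp [cnt]
      · intro i hi hilen
        rw [hlen] at hilen
        rw [hgd i hilen, gl_ascList_take n S i (by omega)]
        have e := cnt_succ S (i-1)
        have : i - 1 + 1 = i := by omega
        rw [this] at e
        split_ifs at e <;> omega
      · rintro ⟨i, j, hij, hj, hlt⟩
        rw [hlen] at hj
        rw [hgd i (by omega), hgd j hj] at hlt
        exact absurd (cnt_mono S (le_of_lt hij)) (by omega)
  have hinj : Set.InjOn (gl n) ↑((Finset.range (n-1)).powersetCard k) := by
    intro S hS T hT h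
    simp only [Finset.mem_coe, Finset.mem_powersetCard] at hS hT
    have hc : ∀ i, i < n → cnt S i = cnt T i := by
      intro i hi
      have h' : (gl n S).getD i 0 = (gl n T).getD i 0 := by rw [h]
      rw [gl_getD n S i hi, gl_getD n T i hi] at h'
      exact h'
    ext a
    by_cases ha : a < n - 1
    · have e1 := cnt_succ S a
      have e2 := cnt_succ T a
      have hca := hc a (by omega)
      have hca1 := hc (a+1) (by omega)
      by_cases hA : a ∈ S <;> by_cases hB : a ∈ T <;>
        simp [hA, hB] at e1 e2 ⊢ <;> omega
    · have : a ∉ Finset.range (n-1) := by simp; omega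
      constructor
      · intro h'; exact absurd (hS.1 h') this
      · intro h'; exact absurd (hT.1 h') this
  rw [hset, Set.ncard_coe_finset, Finset.card_image_of_injOn hinj,
    Finset.card_powersetCard, Finset.card_range]
end

section
/- An ascent sequence avoids the pattern 012 if and only if every letter after the first is 0 or 1; consequently the number of ascent sequences of length n avoiding 012 is 2^{n-1}. -/
/-- A sequence contains the pattern 012. -/
def Contains012 (l : List ℕ) : Prop :=
  ∃ i j k, i < j ∧ j < k ∧ k < l.length ∧
    l.getD i 0 < l.getD j 0 ∧ l.getD j 0 < l.getD k 0

private lemma asc_exists (t : List ℕ) (h : 1 ≤ ascList t) :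
    ∃ j, j + 1 < t.length ∧ t.getD j 0 < t.getD (j+1) 0 := by
  unfold ascList at h
  rw [Nat.one_le_iff_ne_zero, ← Nat.pos_iff_ne_zero, List.countP_pos_iff] at h
  obtain ⟨p, hp, hlt⟩ := h
  obtain ⟨j, hj, hjp⟩ := List.mem_iff_getElem.1 hp
  simp [List.length_zip, List.length_tail] at hj
  have hj1 : j + 1 < t.length := by omega
  rw [List.getElem_zip] at hjp
  refine ⟨j, hj1, ?_⟩
  rw [List.getD_eq_getElem _ _ (by omega), List.getD_eq_getElem _ _ hj1]
  have : t.tail[j]'(by simp [List.length_tail]; omega) = t[j+1] := by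
    simp [List.getElem_tail]
  simp only [decide_eq_true_eq] at hlt
  rw [← hjp] at *
  simpa [this] using hlt

private def S01 (m : ℕ) : Set (List ℕ) := {l : List ℕ | l.length = m ∧ ∀ x ∈ l, x ≤ 1}

private lemma countS01 : ∀ m, (S01 m).Finite ∧ (S01 m).ncard = 2 ^ m := by
  intro m
  induction m with
  | zero =>
    have : S01 0 = {[]} := by
      ext l; simp [S01, List.length_eq_zero_iff]
      rintro rfl; simp
    rw [this]; exact ⟨Set.finite_singleton _, Set.ncard_singleton _⟩
  | succ m ih =>
    obtain ⟨hfin, hcard⟩ := ih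
    have hset : S01 (m+1) = (List.cons 0 '' S01 m) ∪ (List.cons 1 '' S01 m) := by
      ext l
      constructor
      · rintro ⟨hlen, hmem⟩
        obtain ⟨a, t, rfl⟩ : ∃ a t, l = a :: t := by
          cases l with
          | nil => simp at hlen
          | cons a t => exact ⟨a, t, rfl⟩
        have ha : a ≤ 1 := hmem a (by simp)
        have ht : t ∈ S01 m := ⟨by simpa using hlen, fun x hx => hmem x (by simp [hx])⟩
        interval_cases a
        · exact Or.inl ⟨t, ht, rfl⟩
        · exact Or.inr ⟨t, ht, rfl⟩
      · rintro (⟨t, ⟨hlen, hmem⟩, rfl⟩ | ⟨t, ⟨hlen, hmem⟩, rfl⟩) <;>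
          refine ⟨by simp [hlen], ?_⟩ <;>
          · intro x hx
            rcases List.mem_cons.1 hx with rfl | hx
            · omega
            · exact hmem x hx
    have hinj0 : Function.Injective (List.cons 0 : List ℕ → List ℕ) := by
      intro a b h; simpa using h
    have hinj1 : Function.Injective (List.cons 1 : List ℕ → List ℕ) := by
      intro a b h; simpa using h
    have hdisj : Disjoint (List.cons 0 '' S01 m) (List.cons 1 '' S01 m) := by
      rw [Set.disjoint_left]
      rintro l ⟨t, _, rfl⟩ ⟨t', _, h⟩
      simp at h
    rw [hset]
    refine ⟨(hfin.image _).union (hfin.image _), ?_⟩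
    rw [Set.ncard_union_eq hdisj (hfin.image _) (hfin.image _),
      Set.ncard_image_of_injective _ hinj0, Set.ncard_image_of_injective _ hinj1, hcard]
    ring

private lemma part1 (l : List ℕ) (hl : IsAscSeq l) :
    ¬ Contains012 l ↔ ∀ i, 0 < i → i < l.length → l.getD i 0 ≤ 1 := by
  obtain ⟨hne, h0, hbd⟩ := hl
  constructor
  · intro hav
    by_contra hcon
    push_neg at hcon
    obtain ⟨i, hi0, hilen, hi2⟩ := hcon
    have hex : ∃ i, 0 < i ∧ i < l.length ∧ 2 ≤ l.getD i 0 := ⟨i, hi0, hilen, by omega⟩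
    classical
    obtain ⟨i0, ⟨hi00, hi0len, hi02⟩, hmin'⟩ :
        ∃ i0, (0 < i0 ∧ i0 < l.length ∧ 2 ≤ l.getD i0 0) ∧
          ∀ j, j < i0 → ¬(0 < j ∧ j < l.length ∧ 2 ≤ l.getD j 0) :=
      ⟨Nat.find hex, Nat.find_spec hex, fun j hj => Nat.find_min hex hj⟩
    have hmin : ∀ j, j < i0 → l.getD j 0 ≤ 1 := by
      intro j hj
      rcases Nat.eq_zero_or_pos j with rfl | hjpos
      · omega
      · have := hmin' j hj
        push_neg at this
        by_contra hc
        exact absurd (this hjpos (by omega)) (by omega)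
    have hasc : 1 ≤ ascList (l.take i0) := by
      have := hbd i0 hi00 hi0len
      omega
    obtain ⟨j, hjlen, hjlt⟩ := asc_exists _ hasc
    have htlen : (l.take i0).length = i0 := by
      simp [List.length_take]; omega
    rw [htlen] at hjlen
    have hgd : ∀ k, k < i0 → (l.take i0).getD k 0 = l.getD k 0 := by
      intro k hk
      rw [List.getD_eq_getElem _ _ (by omega : k < (l.take i0).length),
        List.getD_eq_getElem _ _ (by omega : k < l.length)]
      simp [List.getElem_take]
    rw [hgd j (by omega), hgd (j+1) (by omega)] at hjlt
    refine hav ⟨j, j+1, i0, by omega, by omega, hi0len, hjlt, ?_⟩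
    have := hmin (j+1) (by omega)
    omega
  · rintro hbd1 ⟨i, j, k, hij, hjk, hk, h1, h2⟩
    have hk1 : l.getD k 0 ≤ 1 := hbd1 k (by omega) hk
    have hj1 : l.getD j 0 = 0 := by omega
    omega

/-- An ascent sequence avoids 012 iff every letter after the first is 0 or 1;
consequently there are `2^(n-1)` ascent sequences of length `n` avoiding 012. -/
theorem stmt7 (n : ℕ) (hn : 1 ≤ n) :
    (∀ l : List ℕ, IsAscSeq l →
      (¬ Contains012 l ↔ ∀ i, 0 < i → i < l.length → l.getD i 0 ≤ 1)) ∧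
    {l : List ℕ | l.length = n ∧ IsAscSeq l ∧ ¬ Contains012 l}.ncard = 2 ^ (n - 1) := by
  refine ⟨part1, ?_⟩
  have hset : {l : List ℕ | l.length = n ∧ IsAscSeq l ∧ ¬ Contains012 l}
      = List.cons 0 '' S01 (n-1) := by
    ext l
    constructor
    · rintro ⟨hlen, hasc, hav⟩
      obtain ⟨hne, h0, hbd⟩ := hasc
      obtain ⟨a, t, rfl⟩ : ∃ a t, l = a :: t := by
        cases l with
        | nil => exact absurd rfl hne
        | cons a t => exact ⟨a, t, rfl⟩
      have ha : a = 0 := by simpa using h0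
      subst ha
      refine ⟨t, ⟨by simp at hlen ⊢; omega, ?_⟩, rfl⟩
      intro x hx
      obtain ⟨i, hi, rfl⟩ := List.mem_iff_getElem.1 hx
      have := (part1 _ ⟨hne, h0, hbd⟩).1 hav (i+1) (by omega) (by simpa using hi)
      rwa [List.getD_cons_succ, List.getD_eq_getElem _ _ hi] at this
    · rintro ⟨t, ⟨hlen, hmem⟩, rfl⟩
      have hbd1 : ∀ i, 0 < i → i < (0 :: t).length → (0 :: t).getD i 0 ≤ 1 := by
        intro i hi hilen
        obtain ⟨j, rfl⟩ : ∃ j, i = j + 1 := ⟨i - 1, by omega⟩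
        have hjlen : j < t.length := by simpa using hilen
        rw [List.getD_cons_succ, List.getD_eq_getElem _ _ hjlen]
        exact hmem _ (List.getElem_mem hjlen)
      have hasc : IsAscSeq (0 :: t) := by
        refine ⟨by simp, by simp, fun i hi hilen => ?_⟩
        have := hbd1 i hi hilen
        omega
      exact ⟨by simp [hlen]; omega, hasc, (part1 _ hasc).2 hbd1⟩
  rw [hset, Set.ncard_image_of_injective _ (fun a b h => by simpa using h)]
  exact (countS01 (n-1)).2
end

section
/- If an ascent sequence x is not a restricted growth function, then x contains the pattern 01012. Equivalently, every ascent sequence avoiding the pattern 01012 is a restricted growth function. -/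
/-- A restricted growth function: starts with 0, and every occurrence of a letter `k+1`
is preceded by an occurrence of `k`. -/
def IsRGF (l : List ℕ) : Prop :=
  l.getD 0 0 = 0 ∧
    ∀ i < l.length, ∀ k, l.getD i 0 = k + 1 → ∃ j < i, l.getD j 0 = k

/-- A sequence contains the pattern 01012. -/
def Contains01012 (l : List ℕ) : Prop :=
  ∃ i1 i2 i3 i4 i5, i1 < i2 ∧ i2 < i3 ∧ i3 < i4 ∧ i4 < i5 ∧ i5 < l.length ∧
    l.getD i1 0 = l.getD i3 0 ∧ l.getD i2 0 = l.getD i4 0 ∧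
    l.getD i1 0 < l.getD i2 0 ∧ l.getD i4 0 < l.getD i5 0


theorem my_ascList_eq : ∀ (L : List ℕ),
    ascList L = ∑ p ∈ Finset.range (L.length - 1),
      (if L.getD p 0 < L.getD (p+1) 0 then 1 else 0)
  | [] => by simp [ascList]
  | [a] => by simp [ascList]
  | a :: b :: t => by
      have ih := my_ascList_eq (b :: t)
      have h1 : ascList (a :: b :: t)
          = ascList (b :: t) + (if a < b then 1 else 0) := by
        simp [ascList, List.countP_cons]
      have h2 : (a :: b :: t).length - 1 = t.length + 1 := by simp
      have h3 : (b :: t).length - 1 = t.length := by simp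
      rw [h1, ih, h2, Finset.sum_range_succ', h3]
      simp

theorem my_getD_take (l : List ℕ) {i p : ℕ} (h : p < i) :
    (l.take i).getD p 0 = l.getD p 0 := by
  simp [List.getD_eq_getElem?_getD, List.getElem?_take_of_lt h]

/-- Downward closure: in a prefix satisfying the RGF recurrence, every value
below a value occurring at `j` occurs before `j`. -/
theorem my_closure (l : List ℕ) (i : ℕ)
    (hrec : ∀ j < i, ∀ m, l.getD j 0 = m + 1 → ∃ r < j, l.getD r 0 = m) :
    ∀ j, j < i → ∀ a, a < l.getD j 0 → ∃ r < j, l.getD r 0 = a := by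
  intro j
  induction j using Nat.strong_induction_on with
  | _ j IH =>
    intro hj a ha
    obtain ⟨m, hm⟩ : ∃ m, l.getD j 0 = m + 1 :=
      ⟨l.getD j 0 - 1, by omega⟩
    obtain ⟨r, hr, hrm⟩ := hrec j hj m hm
    rcases eq_or_lt_of_le (show a ≤ m by omega) with h | h
    · exact ⟨r, hr, h ▸ hrm⟩
    · obtain ⟨r', hr', hr'a⟩ := IH r hr (lt_trans hr hj) a (by omega)
      exact ⟨r', lt_trans hr' hr, hr'a⟩

/-- Every ascent sequence avoiding the pattern 01012 is a restricted growth function. -/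
theorem stmt9 (l : List ℕ) (h : IsAscSeq l) (hav : ¬ Contains01012 l) : IsRGF l := by
  obtain ⟨hne, h0, hasc⟩ := h
  by_contra hnr
  rw [IsRGF] at hnr
  push_neg at hnr
  have hex : ∃ i, i < l.length ∧ ∃ k, l.getD i 0 = k + 1 ∧ ∀ j < i, l.getD j 0 ≠ k := by
    obtain ⟨i, hi, k, hk, hj⟩ := hnr h0
    exact ⟨i, hi, k, hk, fun j hji hje => hj j hji hje⟩
  classical
  obtain ⟨i, hispec, hmin⟩ :
      ∃ i, (i < l.length ∧ ∃ k, l.getD i 0 = k + 1 ∧ ∀ j < i, l.getD j 0 ≠ k) ∧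
        ∀ j < i, ¬(j < l.length ∧ ∃ k, l.getD j 0 = k + 1 ∧ ∀ r < j, l.getD r 0 ≠ k) :=
    ⟨Nat.find hex, Nat.find_spec hex, fun j hj => Nat.find_min hex hj⟩
  obtain ⟨hil, k, hik, hknot⟩ := hispec
  -- minimality: every j < i satisfies the RGF recurrence
  have hrec : ∀ j < i, ∀ m, l.getD j 0 = m + 1 → ∃ r < j, l.getD r 0 = m := by
    intro j hj m hjm
    by_contra hc
    push_neg at hc
    exact hmin j hj ⟨lt_trans hj hil, m, hjm, fun r hr => hc r hr⟩
  have hi0 : 0 < i := by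
    rcases Nat.eq_zero_or_pos i with h | h
    · subst h; rw [h0] at hik; omega
    · exact h
  set f : ℕ → ℕ := fun j => l.getD j 0 with hf
  have hV : ((Finset.range i).image f).Nonempty :=
    ⟨f 0, Finset.mem_image.2 ⟨0, Finset.mem_range.2 hi0, rfl⟩⟩
  set M : ℕ := ((Finset.range i).image f).max' hV with hM
  have hle : ∀ j < i, f j ≤ M := fun j hj =>
    Finset.le_max' _ _ (Finset.mem_image.2 ⟨j, Finset.mem_range.2 hj, rfl⟩)
  have hMocc : ∃ j < i, f j = M := by
    obtain ⟨j, hj, hjM⟩ := Finset.mem_image.1 (Finset.max'_mem _ hV)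
    exact ⟨j, Finset.mem_range.1 hj, hjM⟩
  -- M < k
  have hMk : M < k := by
    by_contra hc
    push_neg at hc
    rcases eq_or_lt_of_le hc with h | h
    · obtain ⟨j, hj, hjM⟩ := hMocc
      exact hknot j hj (show f j = k from by rw [hjM, ← h])
    · obtain ⟨j, hj, hjM⟩ := hMocc
      obtain ⟨r, hr, hrk⟩ := my_closure l i hrec j hj k
        (show k < f j from by rw [hjM]; exact h)
      exact hknot r (lt_trans hr hj) hrk
  -- count of ascents in the prefix
  have htake : ascList (l.take i) =
      ((Finset.range (i-1)).filter (fun p => f p < f (p+1))).card := by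
    rw [my_ascList_eq, Finset.card_filter]
    have hlen : (l.take i).length = i := by
      rw [List.length_take]; omega
    rw [hlen]
    apply Finset.sum_congr rfl
    intro p hp
    have hp' := Finset.mem_range.1 hp
    rw [my_getD_take l (by omega : p < i), my_getD_take l (by omega : p + 1 < i)]
  have hcard : M + 1 ≤ ((Finset.range (i-1)).filter (fun p => f p < f (p+1))).card := by
    have h1 := hasc i hi0 hil
    rw [htake] at h1
    rw [hik] at h1
    omega
  -- pigeonhole on tops of ascents
  have hmaps : ∀ p ∈ (Finset.range (i-1)).filter (fun p => f p < f (p+1)),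
      f (p+1) ∈ Finset.Icc 1 M := by
    intro p hp
    rw [Finset.mem_filter, Finset.mem_range] at hp
    exact Finset.mem_Icc.2 ⟨by omega, hle (p+1) (by omega)⟩
  have hlt : (Finset.Icc 1 M).card <
      ((Finset.range (i-1)).filter (fun p => f p < f (p+1))).card := by
    rw [Nat.card_Icc]; omega
  obtain ⟨p, hp, q, hq, hpq, heq⟩ :=
    Finset.exists_ne_map_eq_of_card_lt_of_maps_to hlt hmaps
  -- wlog p < q
  wlog hplt : p < q generalizing p q
  · exact this q hq p hp (Ne.symm hpq) heq.symm (by omega)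
  have hbM : f (p+1) ≤ M := (Finset.mem_Icc.1 (hmaps p hp)).2
  rw [Finset.mem_filter, Finset.mem_range] at hp hq
  have hqb : f (q+1) = f (p+1) := heq.symm
  have haq : f q < f (p+1) := by rw [← hqb]; exact hq.2
  -- q > p + 1
  have hpq1 : p + 1 < q := by
    rcases eq_or_lt_of_le (show p + 1 ≤ q by omega) with h | h
    · exfalso
      have : f q = f (p+1) := by rw [← h]
      omega
    · exact h
  -- f q occurs before p+1
  obtain ⟨r, hr, hra⟩ := my_closure l i hrec (p+1) (by omega) (f q) haq
  -- assemble the pattern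
  apply hav
  refine ⟨r, p+1, q, q+1, i, hr, hpq1, by omega, by omega, hil, ?_, ?_, ?_, ?_⟩
  · exact hra
  · exact heq
  · show l.getD r 0 < l.getD (p+1) 0
    rw [hra]; exact haq
  · show l.getD (q+1) 0 < l.getD i 0
    rw [hik]
    show f (q+1) < k + 1
    omega
end

section
/- For a pattern p, the set of ascent sequences avoiding p consists solely of restricted growth functions if and only if p is a subpattern of 01012. -/
/-- `l` contains the pattern `p`: there is a subsequence of `l` order-isomorphic to `p`. -/
def ContainsPat (l p : List ℕ) : Prop :=
  ∃ s : List ℕ, s.Sublist l ∧ s.length = p.length ∧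
    ∀ i j, i < p.length → j < p.length →
      (p.getD i 0 < p.getD j 0 ↔ s.getD i 0 < s.getD j 0)

lemma ascList_eq (t : List ℕ) :
    ascList t = ((List.range (t.length - 1)).filter
      (fun j => decide (t.getD j 0 < t.getD (j+1) 0))).length := by
  have hz : t.zip t.tail = (List.range (t.length - 1)).map
      (fun j => (t.getD j 0, t.getD (j+1) 0)) := by
    apply List.ext_getElem
    · simp [List.length_zip, List.length_tail]
    · intro j h1 h2
      have hlen : j < t.length - 1 := by simpa using h2
      have hj : j < t.length := by omega
      have hj1 : j + 1 < t.length := by omega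
      simp only [List.getElem_zip, List.getElem_map, List.getElem_range,
        List.getElem_tail]
      rw [List.getD_eq_getElem _ _ hj, List.getD_eq_getElem _ _ hj1]
  rw [ascList, hz, List.countP_map, List.countP_eq_length_filter]
  rfl

lemma sublist_of_five (l : List ℕ) (a b c d e : ℕ) (hab : a < b) (hbc : b < c)
    (hcd : c < d) (hde : d < e) (he : e < l.length) :
    [l.getD a 0, l.getD b 0, l.getD c 0, l.getD d 0, l.getD e 0].Sublist l := by
  rw [List.sublist_iff_exists_orderEmbedding_getElem?_eq]
  refine ⟨OrderEmbedding.ofStrictMono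
    (fun n => if n = 0 then a else if n = 1 then b else if n = 2 then c
      else if n = 3 then d else if n = 4 then e else n + l.length) ?_, ?_⟩
  · intro i j hij
    dsimp only
    split_ifs <;> omega
  · intro ix
    match ix with
    | 0 => show _ = l[a]?; simp [List.getElem?_eq_getElem (by omega : a < l.length),
        List.getD_eq_getElem _ _ (by omega : a < l.length)]
    | 1 => show _ = l[b]?; simp [List.getElem?_eq_getElem (by omega : b < l.length),
        List.getD_eq_getElem _ _ (by omega : b < l.length)]
    | 2 => show _ = l[c]?; simp [List.getElem?_eq_getElem (by omega : c < l.length),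
        List.getD_eq_getElem _ _ (by omega : c < l.length)]
    | 3 => show _ = l[d]?; simp [List.getElem?_eq_getElem (by omega : d < l.length),
        List.getD_eq_getElem _ _ (by omega : d < l.length)]
    | 4 => show _ = l[e]?; simp [List.getElem?_eq_getElem he,
        List.getD_eq_getElem _ _ he]
    | (n+5) =>
      show _ = l[n + 5 + l.length]?
      rw [List.getElem?_eq_none (by simp), List.getElem?_eq_none (by simp)]

lemma key_lemma {l : List ℕ} (hasc : IsAscSeq l) (hnr : ¬ IsRGF l) :
    ContainsPat l [0, 1, 0, 1, 2] := by
  obtain ⟨hne, h0, hascb⟩ := hasc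
  set v : ℕ → ℕ := fun j => l.getD j 0 with hv
  -- there is a violation
  have hexP : ∃ i, (i < l.length ∧ ∃ k, v i = k + 1 ∧ ∀ j < i, v j ≠ k) := by
    rw [IsRGF] at hnr
    push_neg at hnr
    obtain ⟨i, hi, k, hk1, hk2⟩ := hnr h0
    exact ⟨i, hi, k, hk1, hk2⟩
  classical
  obtain ⟨i, ⟨hilen, k, hik, hknot⟩, hmin⟩ :
      ∃ i, (i < l.length ∧ ∃ k, v i = k + 1 ∧ ∀ j < i, v j ≠ k) ∧
        ∀ i' < i, ¬ (i' < l.length ∧ ∃ k, v i' = k + 1 ∧ ∀ j < i', v j ≠ k) :=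
    ⟨Nat.find hexP, Nat.find_spec hexP, fun i' h => Nat.find_min hexP h⟩
  -- prefix RGF property
  have hP : ∀ j < i, ∀ m, v j = m + 1 → ∃ j' < j, v j' = m := by
    intro j hj m hm
    by_contra hcon
    push_neg at hcon
    exact hmin j hj ⟨hj.trans hilen, m, hm, hcon⟩
  -- all smaller values occur before
  have hQ : ∀ b, ∀ j < i, v j = b → ∀ w < b, ∃ j' < j, v j' = w := by
    intro b
    induction b using Nat.strong_induction_on with
    | _ b ih =>
      intro j hj hb w hw
      obtain ⟨m, rfl⟩ : ∃ m, b = m + 1 := ⟨b - 1, by omega⟩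
      obtain ⟨j1, hj1, hvj1⟩ := hP j hj m hb
      rcases eq_or_lt_of_le (Nat.lt_succ_iff.mp hw) with h | h
      · exact ⟨j1, hj1, h ▸ hvj1⟩
      · obtain ⟨j', hj', hvj'⟩ := ih m (by omega) j1 (hj1.trans hj) hvj1 w h
        exact ⟨j', hj'.trans hj1, hvj'⟩
  -- i > 0
  have hipos : 0 < i := by
    rcases Nat.eq_zero_or_pos i with h | h
    · exfalso
      have h2 := hik
      simp only [hv, h] at h2
      omega
    · exact h
  -- k ≥ 1
  have hk1 : 1 ≤ k := by
    by_contra h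
    push_neg at h
    interval_cases k
    exact hknot 0 hipos h0
  -- all prefix values < k
  have hlt : ∀ j < i, v j < k := by
    intro j hj
    rcases lt_trichotomy (v j) k with h | h | h
    · exact h
    · exact absurd h (hknot j hj)
    · obtain ⟨j', hj', hvj'⟩ := hQ (v j) j hj rfl k h
      exact absurd hvj' (hknot j' (hj'.trans hj))
  -- ascent count bound
  have hbound : k ≤ ascList (l.take i) := by
    have h1 := hascb i hipos hilen
    have h2 := hik
    simp only [hv] at h2
    omega
  -- ascents as a filtered list of indices
  set T : List ℕ := (List.range (i - 1)).filter
      (fun j => decide (v j < v (j+1))) with hT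
  have htakelen : (l.take i).length = i := by
    rw [List.length_take]
    omega
  have hTlen : ascList (l.take i) = T.length := by
    rw [ascList_eq, hT, htakelen]
    congr 1
    apply List.filter_congr
    intro j hj
    rw [List.mem_range] at hj
    have h1 : (l.take i).getD j 0 = v j := by
      rw [List.getD_eq_getElem?_getD, List.getElem?_take_of_lt (by omega : j < i), hv]
      rw [← List.getD_eq_getElem?_getD]
    have h2 : (l.take i).getD (j+1) 0 = v (j+1) := by
      rw [List.getD_eq_getElem?_getD, List.getElem?_take_of_lt (by omega : j + 1 < i), hv]
      rw [← List.getD_eq_getElem?_getD]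
    rw [h1, h2]
  -- elements of T
  have hTmem : ∀ j ∈ T, j < i - 1 ∧ v j < v (j + 1) := by
    intro j hj
    rw [hT, List.mem_filter, List.mem_range] at hj
    exact ⟨hj.1, by simpa using hj.2⟩
  have hTnodup : T.Nodup := List.nodup_range.filter _
  -- pigeonhole on tops of ascents
  obtain ⟨x, hx, y, hy, hxy, hfeq⟩ :
      ∃ x ∈ T.toFinset, ∃ y ∈ T.toFinset, x ≠ y ∧ v (x + 1) = v (y + 1) := by
    apply Finset.exists_ne_map_eq_of_card_lt_of_maps_to
        (t := Finset.Ioo 0 k)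
    · rw [List.toFinset_card_of_nodup hTnodup, Nat.card_Ioo]
      omega
    · intro j hj
      rw [Finset.mem_coe, List.mem_toFinset] at hj
      obtain ⟨hj1, hj2⟩ := hTmem j hj
      rw [Finset.mem_coe, Finset.mem_Ioo]
      exact ⟨by show 0 < v (j + 1); omega, hlt (j + 1) (by omega)⟩
  rw [List.mem_toFinset] at hx hy
  -- order the two ascent positions
  obtain ⟨j1, j2, hj1T, hj2T, hj12, htop⟩ :
      ∃ j1 j2, j1 ∈ T ∧ j2 ∈ T ∧ j1 < j2 ∧ v (j1 + 1) = v (j2 + 1) := by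
    rcases lt_or_gt_of_ne hxy with h | h
    · exact ⟨x, y, hx, hy, h, hfeq⟩
    · exact ⟨y, x, hy, hx, h, hfeq.symm⟩
  obtain ⟨hj1i, hasc1⟩ := hTmem j1 hj1T
  obtain ⟨hj2i, hasc2⟩ := hTmem j2 hj2T
  obtain ⟨b, hb⟩ : ∃ b, v (j1 + 1) = b := ⟨_, rfl⟩
  obtain ⟨a, ha⟩ : ∃ a, v j2 = a := ⟨_, rfl⟩
  have hab : a < b := by
    rw [← ha, ← hb, htop]
    exact hasc2
  have hbk : b < k := by
    rw [← hb]
    exact hlt (j1 + 1) (by omega)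
  have hsep : j1 + 1 < j2 := by
    rcases Nat.lt_or_ge (j1 + 1) j2 with h | h
    · exact h
    · exfalso
      have he : j1 + 1 = j2 := by omega
      rw [he] at hb
      have := hasc2
      rw [hb, ← htop, he, hb] at this
      omega
  obtain ⟨j0, hj0, hvj0⟩ := hQ b (j1 + 1) (by omega) hb a hab
  have hvi : v i = k + 1 := hik
  have hs : [v j0, v (j1 + 1), v j2, v (j2 + 1), v i].Sublist l :=
    sublist_of_five l j0 (j1 + 1) j2 (j2 + 1) i (by omega) hsep (by omega)
      (by omega) hilen
  have htop2 : v (j2 + 1) = b := by rw [← htop, hb]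
  rw [hvj0, hvi, hb, ha, htop2] at hs
  refine ⟨[a, b, a, b, k + 1], hs, rfl, ?_⟩
  intro x y hx hy
  simp only [List.length_cons, List.length_nil] at hx hy
  interval_cases x <;> interval_cases y <;> simp [List.getD] <;> omega

lemma containsPat_trans {l q p : List ℕ} (h1 : ContainsPat l q) (h2 : ContainsPat q p) :
    ContainsPat l p := by
  obtain ⟨s, hsl, hslen, hsiso⟩ := h1
  obtain ⟨t, htq, htlen, htiso⟩ := h2
  obtain ⟨f, hf⟩ := List.sublist_iff_exists_fin_orderEmbedding_get_eq.mp htq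
  -- u : the subsequence of s at the indices given by f
  set g : Fin t.length → Fin s.length := fun ix => Fin.cast hslen.symm (f ix) with hg
  have hgmono : StrictMono g := by
    intro i j hij
    exact f.strictMono hij
  set u : List ℕ := (List.finRange t.length).map (fun ix => s.get (g ix)) with hu
  have hulen : u.length = t.length := by simp [hu]
  have huget : ∀ i (h : i < t.length), u.getD i 0 = s.get (g ⟨i, h⟩) := by
    intro i h
    rw [List.getD_eq_getElem _ _ (by simpa [hulen] using h)]
    simp [hu]
  have husub : u.Sublist s := by
    rw [List.sublist_iff_exists_fin_orderEmbedding_get_eq]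
    refine ⟨OrderEmbedding.ofStrictMono (fun ix => g (Fin.cast hulen ix)) ?_, ?_⟩
    · intro i j hij
      exact hgmono (by simpa using hij)
    · intro ix
      have h2 : (ix : ℕ) < t.length := by simpa [hulen] using ix.2
      rw [List.get_eq_getElem, ← List.getD_eq_getElem u 0 ix.2, huget ix.1 h2]
      rfl
  refine ⟨u, husub.trans hsl, by omega, ?_⟩
  intro i j hi hj
  have hit : i < t.length := by omega
  have hjt : j < t.length := by omega
  have ht_i : t.getD i 0 = q.getD ((f ⟨i, hit⟩ : Fin q.length) : ℕ) 0 := by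
    rw [List.getD_eq_getElem _ _ hit, List.getD_eq_getElem _ _ (f ⟨i, hit⟩).2]
    exact hf ⟨i, hit⟩
  have ht_j : t.getD j 0 = q.getD ((f ⟨j, hjt⟩ : Fin q.length) : ℕ) 0 := by
    rw [List.getD_eq_getElem _ _ hjt, List.getD_eq_getElem _ _ (f ⟨j, hjt⟩).2]
    exact hf ⟨j, hjt⟩
  have hu_i : u.getD i 0 = s.getD ((f ⟨i, hit⟩ : Fin q.length) : ℕ) 0 := by
    rw [huget i hit, List.get_eq_getElem, ← List.getD_eq_getElem s 0]
    rfl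
  have hu_j : u.getD j 0 = s.getD ((f ⟨j, hjt⟩ : Fin q.length) : ℕ) 0 := by
    rw [huget j hjt, List.get_eq_getElem, ← List.getD_eq_getElem s 0]
    rfl
  rw [htiso i j hi hj, ht_i, ht_j, hu_i, hu_j]
  exact hsiso _ _ (f ⟨i, hit⟩).2 (f ⟨j, hjt⟩).2

lemma witness_asc : IsAscSeq [0, 1, 0, 1, 3] := by
  refine ⟨by simp, rfl, ?_⟩
  intro i h1 h2
  simp only [List.length_cons, List.length_nil] at h2
  interval_cases i <;> decide

lemma witness_not_rgf : ¬ IsRGF [0, 1, 0, 1, 3] := by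
  rintro ⟨-, h⟩
  obtain ⟨j, hj, hv⟩ := h 4 (by norm_num) 2 rfl
  interval_cases j <;> simp at hv

lemma witness_contains {p : List ℕ} (h : ContainsPat [0, 1, 0, 1, 3] p) :
    ContainsPat [0, 1, 0, 1, 2] p := by
  obtain ⟨s, hsl, hlen, hiso⟩ := h
  have hmem : ∀ x ∈ s, x = 0 ∨ x = 1 ∨ x = 3 := by
    intro x hx
    have := hsl.subset hx
    simp at this
    omega
  refine ⟨s.map (fun x => min x 2), ?_, by simpa using hlen, ?_⟩
  · have : [0, 1, 0, 1, 2] = [0, 1, 0, 1, 3].map (fun x => min x 2) := by decide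
    rw [this]
    exact hsl.map _
  · intro i j hi hj
    have hgi : i < s.length := by omega
    have hgj : j < s.length := by omega
    have hmap : ∀ m (hm : m < s.length),
        (s.map (fun x => min x 2)).getD m 0 = min (s.getD m 0) 2 := by
      intro m hm
      rw [List.getD_eq_getElem _ _ (by simpa using hm), List.getD_eq_getElem _ _ hm,
        List.getElem_map]
    rw [hmap i hgi, hmap j hgj, hiso i j hi hj]
    have m1 : s.getD i 0 ∈ s := by
      rw [List.getD_eq_getElem _ _ hgi]; exact List.getElem_mem _
    have m2 : s.getD j 0 ∈ s := by
      rw [List.getD_eq_getElem _ _ hgj]; exact List.getElem_mem _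
    have h1 := hmem _ m1
    have h2 := hmem _ m2
    constructor <;> intro hlt <;> omega

/-- The ascent sequences avoiding a (nonempty) pattern `p` are all restricted growth
functions if and only if `p` is a subpattern of 01012. -/
theorem stmt10 (p : List ℕ) (hp : p ≠ []) :
    (∀ l : List ℕ, IsAscSeq l → ¬ ContainsPat l p → IsRGF l) ↔
      ContainsPat [0, 1, 0, 1, 2] p := by
  constructor
  · intro H
    by_contra hnc
    have havoid : ¬ ContainsPat [0, 1, 0, 1, 3] p := fun h => hnc (witness_contains h)
    exact witness_not_rgf (H _ witness_asc havoid)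
  · intro h01 l hasc havoid
    by_contra hnr
    exact havoid (containsPat_trans (key_lemma hasc hnr) h01)
end

section
/- An ascent sequence contains the pattern 101 if and only if it contains the pattern 0101. Hence the sets of ascent sequences of length n avoiding 101 and avoiding 0101 coincide. -/
/-- A sequence contains the pattern 101. -/
def Contains101 (l : List ℕ) : Prop :=
  ∃ i j k, i < j ∧ j < k ∧ k < l.length ∧
    l.getD j 0 < l.getD i 0 ∧ l.getD i 0 = l.getD k 0

/-- A sequence contains the pattern 0101. -/
def Contains0101 (l : List ℕ) : Prop :=
  ∃ i j k m, i < j ∧ j < k ∧ k < m ∧ m < l.length ∧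
    l.getD i 0 = l.getD k 0 ∧ l.getD j 0 = l.getD m 0 ∧ l.getD i 0 < l.getD j 0

lemma countP_card {α : Type*} (L : List α) (p : α → Bool) (d : α) :
    L.countP p = ((Finset.range L.length).filter (fun i => p (L.getD i d))).card := by
  induction L with
  | nil => simp
  | cons x L ih =>
    simp only [List.countP_cons, List.length_cons, Finset.card_filter,
      Finset.sum_range_succ'] at *
    simp only [List.getD_cons_succ, List.getD_cons_zero]
    rw [ih]

lemma ascList_card (m : List ℕ) :
    ascList m = ((Finset.range (m.length - 1)).filter
      (fun t => m.getD t 0 < m.getD (t+1) 0)).card := by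
  have hzl : (m.zip m.tail).length = m.length - 1 := by
    rw [List.length_zip, List.length_tail]
    omega
  rw [ascList, countP_card _ _ (0,0), hzl]
  congr 1
  apply Finset.filter_congr
  intro i hi
  simp only [Finset.mem_range] at hi
  have hiz : i < (m.zip m.tail).length := by omega
  have him : i < m.length := by omega
  have him1 : i + 1 < m.length := by omega
  rw [List.getD_eq_getElem _ _ hiz, List.getElem_zip]
  rw [List.getD_eq_getElem m 0 him, List.getD_eq_getElem m 0 him1]
  simp [List.getElem_tail]

lemma getD_take (l : List ℕ) (s t : ℕ) (ht : t < s) (hl : t < l.length) :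
    (l.take s).getD t 0 = l.getD t 0 := by
  rw [List.getD_eq_getElem l 0 hl, List.getD_eq_getElem _ 0 (by simp; omega)]
  exact List.getElem_take ..

lemma key_s11 (l : List ℕ) (hl : IsAscSeq l) (b : ℕ) :
    ∀ i j k, i < j → j < k → k < l.length →
      l.getD i 0 = b → l.getD k 0 = b → l.getD j 0 < b → Contains0101 l := by
  induction b using Nat.strong_induction_on with
  | _ b ih =>
  intro i j k hij hjk hk hib hkb hjb
  set a := l.getD j 0 with ha
  by_cases hp : ∃ p < i, l.getD p 0 = a
  · obtain ⟨p, hpi, hpa⟩ := hp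
    exact ⟨p, i, j, k, hpi, hij, hjk, hk, hpa.trans ha, hib.trans hkb.symm,
      by rw [hpa, hib]; omega⟩
  push_neg at hp
  have hil : i < l.length := by omega
  have hi0 : 0 < i := by
    rcases Nat.eq_zero_or_pos i with h | h
    · exfalso; rw [h] at hib; rw [hl.2.1] at hib; omega
    · exact h
  have ha1 : 1 ≤ a := by
    rcases Nat.eq_zero_or_pos a with h | h
    · exact absurd (hl.2.1.trans h.symm) (hp 0 hi0)
    · exact h
  -- least index s with a < l.getD s 0
  have hex : ∃ s, a < l.getD s 0 := ⟨i, by rw [hib]; omega⟩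
  set s := Nat.find hex with hs
  have hsspec : a < l.getD s 0 := Nat.find_spec hex
  have hsi : s ≤ i := Nat.find_le (by rw [hib]; omega)
  have hs0 : 0 < s := by
    rcases Nat.eq_zero_or_pos s with h | h
    · exfalso; rw [h, hl.2.1] at hsspec; omega
    · exact h
  have hlt : ∀ t < s, l.getD t 0 < a := by
    intro t hts
    have h1 : ¬ a < l.getD t 0 := Nat.find_min hex hts
    have h2 : l.getD t 0 ≠ a := hp t (lt_of_lt_of_le hts hsi)
    omega
  -- the ascent bound at s
  have hasc : a ≤ ascList (l.take s) := by
    have := hl.2.2 s hs0 (lt_of_le_of_lt hsi (by omega))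
    omega
  have hlen : (l.take s).length = s := by
    simp; omega
  rw [ascList_card, hlen] at hasc
  -- pigeonhole on ascent tops
  set S := (Finset.range (s - 1)).filter
      (fun t => (l.take s).getD t 0 < (l.take s).getD (t+1) 0) with hS
  have hmaps : ∀ t ∈ S, l.getD (t+1) 0 ∈ Finset.Icc 1 (a - 1) := by
    intro t htS
    simp only [hS, Finset.mem_filter, Finset.mem_range] at htS
    obtain ⟨htr, hrise⟩ := htS
    have h1 : t < s := by omega
    have h2 : t + 1 < s := by omega
    rw [getD_take l s t h1 (by omega), getD_take l s (t+1) h2 (by omega)] at hrise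
    have := hlt (t+1) h2
    simp only [Finset.mem_Icc]
    omega
  have hcard : (Finset.Icc 1 (a-1)).card < S.card := by
    rw [Nat.card_Icc]
    omega
  obtain ⟨t1, ht1, t2, ht2, hne, heq⟩ :=
    Finset.exists_ne_map_eq_of_card_lt_of_maps_to hcard hmaps
  -- extract data
  have hdata : ∀ t ∈ S, t + 1 < s ∧ l.getD t 0 < l.getD (t+1) 0 := by
    intro t htS
    simp only [hS, Finset.mem_filter, Finset.mem_range] at htS
    obtain ⟨htr, hrise⟩ := htS
    have h2 : t + 1 < s := by omega
    rw [getD_take l s t (by omega) (by omega), getD_take l s (t+1) h2 (by omega)] at hrise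
    exact ⟨h2, hrise⟩
  obtain ⟨h1s, h1r⟩ := hdata t1 ht1
  obtain ⟨h2s, h2r⟩ := hdata t2 ht2
  have hsl : s < l.length := by omega
  have hvlt : l.getD (t2+1) 0 < b := by
    have := hmaps t2 ht2
    simp only [Finset.mem_Icc] at this
    omega
  rcases hne.lt_or_gt with hlt12 | hlt21
  · have h12 : t1 + 1 < t2 := by
      rcases Nat.lt_or_ge (t1+1) t2 with h | h
      · exact h
      · exfalso
        have ht : t2 = t1 + 1 := by omega
        rw [ht] at h2r heq
        omega
    exact ih (l.getD (t2+1) 0) hvlt (t1+1) t2 (t2+1) h12 (by omega) (by omega)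
      heq rfl h2r
  · have h21 : t2 + 1 < t1 := by
      rcases Nat.lt_or_ge (t2+1) t1 with h | h
      · exact h
      · exfalso
        have ht : t1 = t2 + 1 := by omega
        rw [ht] at h1r heq
        omega
    exact ih (l.getD (t1+1) 0) (by rw [heq]; exact hvlt) (t2+1) t1 (t1+1) h21 (by omega)
      (by omega) heq.symm rfl h1r

/-- An ascent sequence contains 101 iff it contains 0101; hence the 101-avoiding and
0101-avoiding ascent sequences of each length coincide. -/
theorem stmt11 :
    (∀ l : List ℕ, IsAscSeq l → (Contains101 l ↔ Contains0101 l)) ∧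
    ∀ n : ℕ,
      {l : List ℕ | l.length = n ∧ IsAscSeq l ∧ ¬ Contains101 l} =
      {l : List ℕ | l.length = n ∧ IsAscSeq l ∧ ¬ Contains0101 l} := by
  have main : ∀ l : List ℕ, IsAscSeq l → (Contains101 l ↔ Contains0101 l) := by
    intro l hl
    constructor
    · rintro ⟨i, j, k, hij, hjk, hk, hji, hik⟩
      exact key_s11 l hl (l.getD i 0) i j k hij hjk hk rfl hik.symm hji
    · rintro ⟨i, j, k, m, hij, hjk, hkm, hm, hik, hjm, hlt⟩
      exact ⟨j, k, m, hjk, hkm, hm, by omega, hjm⟩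
  refine ⟨main, fun n => ?_⟩
  ext l
  simp only [Set.mem_setOf_eq]
  constructor
  · rintro ⟨h1, h2, h3⟩; exact ⟨h1, h2, fun h => h3 ((main l h2).mpr h)⟩
  · rintro ⟨h1, h2, h3⟩; exact ⟨h1, h2, fun h => h3 ((main l h2).mp h)⟩
end

section
/- The number of ascent sequences of length n avoiding the pattern 101 equals the n-th Catalan number, and the number of such sequences with exactly k ascents is the Narayana number N(n,k+1) (the same as the ascent distribution on 312-avoiding permutations). -/
namespace S12

open Finset

def Valid (l : List ℕ) : Prop := IsAscSeq l ∧ ¬ Contains101 l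

/-- last element with default 0 -/
def lst (l : List ℕ) : ℕ := l.getD (l.length - 1) 0

def bad (s : List ℕ) (v : ℕ) : Prop :=
  ∃ i j, i < j ∧ j < s.length ∧ s.getD i 0 = v ∧ s.getD j 0 < v

open Classical in
noncomputable def Allow (s : List ℕ) : Finset ℕ :=
  (Finset.range (lst s + 1)).filter (fun v => ¬ bad s v)

noncomputable def label (s : List ℕ) : ℕ := (Allow s).card

lemma mem_Allow {s : List ℕ} {v : ℕ} : v ∈ Allow s ↔ v ≤ lst s ∧ ¬ bad s v := by
  simp [Allow, Nat.lt_succ_iff]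

/- ascList basics -/
lemma ascList_nil : ascList [] = 0 := rfl
lemma ascList_single (x : ℕ) : ascList [x] = 0 := rfl

lemma ascList_cons_cons (x y : ℕ) (t : List ℕ) :
    ascList (x :: y :: t) = (if x < y then 1 else 0) + ascList (y :: t) := by
  simp only [ascList, List.tail_cons, List.zip_cons_cons, List.countP_cons]
  rcases lt_or_ge x y with h | h <;> simp [h, Nat.add_comm, Nat.not_lt.mpr h]

lemma getD_concat_lt (s : List ℕ) (v : ℕ) {i : ℕ} (h : i < s.length) :
    (s ++ [v]).getD i 0 = s.getD i 0 := List.getD_append _ _ _ _ h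

lemma getD_concat_len (s : List ℕ) (v : ℕ) : (s ++ [v]).getD s.length 0 = v := by
  rw [List.getD_append_right _ _ _ _ le_rfl]; simp

lemma lst_concat (s : List ℕ) (v : ℕ) : lst (s ++ [v]) = v := by
  simp only [lst, List.length_append, List.length_cons, List.length_nil]
  have : s.length + 1 - 1 = s.length := by omega
  rw [this, getD_concat_len]

lemma lst_cons_of_ne (x : ℕ) {r : List ℕ} (h : r ≠ []) : lst (x :: r) = lst r := by
  have hr : 0 < r.length := List.length_pos_iff.mpr h
  simp only [lst, List.length_cons, Nat.add_sub_cancel]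
  have h1 : r.length = (r.length - 1) + 1 := by omega
  rw [h1, List.getD_cons_succ]
  simp

lemma head_concat_getD {s : List ℕ} (h : s ≠ []) (v : ℕ) :
    (s ++ [v]).getD 0 0 = s.getD 0 0 := by
  apply getD_concat_lt; exact List.length_pos_iff.mpr h

lemma ascList_concat {s : List ℕ} (h : s ≠ []) (v : ℕ) :
    ascList (s ++ [v]) = ascList s + (if lst s < v then 1 else 0) := by
  induction s with
  | nil => exact absurd rfl h
  | cons x r ih =>
    rcases eq_or_ne r [] with rfl | hr
    · rw [show ([x] ++ [v] : List ℕ) = x :: v :: [] from rfl, ascList_cons_cons]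
      simp [ascList_single, lst, Nat.add_comm]
    · obtain ⟨y, t, rfl⟩ := List.exists_cons_of_ne_nil hr
      have h1 : (x :: y :: t) ++ [v] = x :: ((y :: t) ++ [v]) := rfl
      have h2 : (y :: t) ++ [v] = y :: (t ++ [v]) := rfl
      rw [h1, h2, ascList_cons_cons, ← h2, ih hr, ascList_cons_cons, lst_cons_of_ne x hr]
      ring

lemma ascList_le (l : List ℕ) : ascList l + 1 ≤ l.length ∨ l = [] := by
  rcases eq_or_ne l [] with rfl | h
  · right; rfl
  · left
    have : (l.zip l.tail).length ≤ l.tail.length := by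
      rw [List.length_zip]; omega
    have h2 := List.countP_le_length (p := fun p => decide (p.1 < p.2)) (l := l.zip l.tail)
    have h3 : l.tail.length = l.length - 1 := List.length_tail (l := l)
    have h4 : 0 < l.length := List.length_pos_iff.mpr h
    simp only [ascList]; omega

end S12

namespace S12
open Finset

lemma take_concat {s : List ℕ} (v : ℕ) {i : ℕ} (h : i ≤ s.length) :
    (s ++ [v]).take i = s.take i := by
  rw [List.take_append_of_le_length h]

lemma getD_eq_zero_of_le {l : List ℕ} {i : ℕ} (h : l.length ≤ i) : l.getD i 0 = 0 :=
  List.getD_eq_default _ _ h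

lemma IsAscSeq_concat {s : List ℕ} (hs : s ≠ []) (v : ℕ) :
    IsAscSeq (s ++ [v]) ↔ IsAscSeq s ∧ v ≤ ascList s + 1 := by
  have hlen : 0 < s.length := List.length_pos_iff.mpr hs
  constructor
  · rintro ⟨-, h0, hle⟩
    refine ⟨⟨hs, ?_, ?_⟩, ?_⟩
    · rwa [head_concat_getD hs] at h0
    · intro i hi hilen
      have := hle i hi (by simp; omega)
      rwa [getD_concat_lt _ _ hilen, take_concat _ (le_of_lt hilen)] at this
    · have := hle s.length hlen (by simp)
      rwa [getD_concat_len, take_concat _ le_rfl, List.take_length] at this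
  · rintro ⟨⟨-, h0, hle⟩, hv⟩
    refine ⟨by simp, by rwa [head_concat_getD hs], ?_⟩
    intro i hi hilen
    rcases lt_or_ge i s.length with h | h
    · rw [getD_concat_lt _ _ h, take_concat _ (le_of_lt h)]
      exact hle i hi h
    · have hieq : i = s.length := by simp at hilen; omega
      subst hieq
      rwa [getD_concat_len, take_concat _ le_rfl, List.take_length]

lemma Contains101_concat {s : List ℕ} (v : ℕ) :
    Contains101 (s ++ [v]) ↔ Contains101 s ∨ bad s v := by
  constructor
  · rintro ⟨i, j, k, hij, hjk, hk, hlt, heq⟩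
    have hk' : k < s.length + 1 := by simpa using hk
    rcases lt_or_ge k s.length with h | h
    · left
      exact ⟨i, j, k, hij, hjk, h,
        by rwa [getD_concat_lt _ _ (by omega), getD_concat_lt _ _ (by omega)] at hlt,
        by rwa [getD_concat_lt _ _ (by omega), getD_concat_lt _ _ h] at heq⟩
    · right
      have hkeq : k = s.length := by omega
      subst hkeq
      have hi' : i < s.length := by omega
      rw [getD_concat_lt s v hi', getD_concat_len] at heq
      rw [getD_concat_lt s v hjk, getD_concat_lt s v hi', heq] at hlt
      exact ⟨i, j, hij, hjk, heq, hlt⟩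
  · rintro (⟨i, j, k, hij, hjk, hk, hlt, heq⟩ | ⟨i, j, hij, hj, heqi, hlt⟩)
    · exact ⟨i, j, k, hij, hjk, by simp; omega,
        by rwa [getD_concat_lt _ _ (by omega), getD_concat_lt _ _ (by omega)],
        by rwa [getD_concat_lt _ _ (by omega), getD_concat_lt _ _ hk]⟩
    · have hi' : i < s.length := by omega
      refine ⟨i, j, s.length, hij, hj, by simp, ?_, ?_⟩
      · rw [getD_concat_lt s v hi', getD_concat_lt s v hj, heqi]; exact hlt
      · rw [getD_concat_lt s v hi', getD_concat_len]; exact heqi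

lemma Valid_drop {s : List ℕ} (hs : s ≠ []) (v : ℕ) (h : Valid (s ++ [v])) : Valid s := by
  obtain ⟨ha, hc⟩ := h
  exact ⟨((IsAscSeq_concat hs v).mp ha).1, fun hcc => hc ((Contains101_concat v).mpr (Or.inl hcc))⟩

lemma Valid_ne_nil {l : List ℕ} (h : Valid l) : l ≠ [] := h.1.1

end S12

namespace S12
open Finset

lemma valid_struct : ∀ l : List ℕ, Valid l →
    (∀ i < l.length, l.getD i 0 ≤ ascList l) ∧
    (∀ w ≤ ascList l, ∃ i < l.length, l.getD i 0 = w) := by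
  intro l
  induction l using List.reverseRecOn with
  | nil => intro h; exact absurd rfl h.1.1
  | append_singleton s v ih =>
    intro h
    rcases eq_or_ne s [] with rfl | hs
    · have h0 : v = 0 := by simpa using h.1.2.1
      subst h0
      rw [List.nil_append]
      constructor
      · intro i hi
        simp only [List.length_cons, List.length_nil] at hi
        have : i = 0 := by omega
        subst this; simp [ascList_single]
      · intro w hw
        simp only [ascList_single, Nat.le_zero] at hw
        exact ⟨0, by simp, by simp [hw]⟩
    · have hvalid_s : Valid s := Valid_drop hs v h
      obtain ⟨hent, hocc⟩ := ih hvalid_s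
      have hv : v ≤ ascList s + 1 := ((IsAscSeq_concat hs v).mp h.1).2
      have notbad : ¬ bad s v := fun hb => h.2 ((Contains101_concat v).mpr (Or.inr hb))
      have hlen : 0 < s.length := List.length_pos_iff.mpr hs
      have hlst : lst s ≤ ascList s := hent _ (by omega)
      rcases le_or_gt v (lst s) with hvle | hvgt
      · have asc_eq : ascList (s ++ [v]) = ascList s := by
          rw [ascList_concat hs]; simp [Nat.not_lt.mpr hvle]
        constructor
        · intro i hi
          rcases lt_or_ge i s.length with hi' | hi'
          · rw [getD_concat_lt _ _ hi', asc_eq]; exact hent i hi'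
          · have : i = s.length := by simp at hi; omega
            subst this
            rw [getD_concat_len, asc_eq]; omega
        · intro w hw
          rw [asc_eq] at hw
          obtain ⟨i, hi, hieq⟩ := hocc w hw
          exact ⟨i, by simp; omega, by rwa [getD_concat_lt _ _ hi]⟩
      · -- ascent: must be v = ascList s + 1
        have hveq : v = ascList s + 1 := by
          rcases Nat.lt_or_ge (ascList s) v with h1 | h1
          · omega
          · exfalso
            obtain ⟨i, hi, hieq⟩ := hocc v h1
            have hine : i ≠ s.length - 1 := by
              intro heq; rw [heq] at hieq; change lst s = v at hieq; omega
            exact notbad ⟨i, s.length - 1, by omega, by omega, hieq, by change lst s < v; omega⟩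
        have asc_eq : ascList (s ++ [v]) = ascList s + 1 := by
          rw [ascList_concat hs]; simp [hvgt]
        constructor
        · intro i hi
          rcases lt_or_ge i s.length with hi' | hi'
          · rw [getD_concat_lt _ _ hi', asc_eq]
            exact le_trans (hent i hi') (by omega)
          · have : i = s.length := by simp at hi; omega
            subst this
            rw [getD_concat_len, asc_eq]; omega
        · intro w hw
          rw [asc_eq] at hw
          rcases Nat.lt_or_ge w (ascList s + 1) with h1 | h1
          · obtain ⟨i, hi, hieq⟩ := hocc w (by omega)
            exact ⟨i, by simp; omega, by rwa [getD_concat_lt _ _ hi]⟩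
          · have : w = v := by omega
            exact ⟨s.length, by simp, by rw [getD_concat_len, this]⟩

lemma entries_le {l : List ℕ} (h : Valid l) : ∀ i < l.length, l.getD i 0 ≤ ascList l :=
  (valid_struct l h).1

lemma occurs {l : List ℕ} (h : Valid l) : ∀ w ≤ ascList l, ∃ i < l.length, l.getD i 0 = w :=
  (valid_struct l h).2

lemma lst_le_asc {l : List ℕ} (h : Valid l) : lst l ≤ ascList l :=
  entries_le h _ (by have := List.length_pos_iff.mpr (Valid_ne_nil h); omega)

lemma lst_mem_Allow {l : List ℕ} (h : Valid l) : lst l ∈ Allow l := by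
  rw [mem_Allow]
  refine ⟨le_rfl, ?_⟩
  rintro ⟨i, j, hij, hj, hieq, hjlt⟩
  have hlen : 0 < l.length := List.length_pos_iff.mpr (Valid_ne_nil h)
  have hjne : j ≠ l.length - 1 := by
    intro heq; rw [heq] at hjlt; change lst l < lst l at hjlt; omega
  exact h.2 ⟨i, j, l.length - 1, hij, by omega, by omega, by rw [hieq]; exact hjlt, hieq⟩

lemma label_pos {l : List ℕ} (h : Valid l) : 1 ≤ label l :=
  Finset.card_pos.mpr ⟨lst l, lst_mem_Allow h⟩

lemma label_le {l : List ℕ} : label l ≤ lst l + 1 := by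
  have hsub : Allow l ⊆ Finset.range (lst l + 1) := by
    intro v hv; rw [mem_Allow] at hv; exact Finset.mem_range.mpr (by omega)
  calc label l ≤ (Finset.range (lst l + 1)).card := Finset.card_le_card hsub
    _ = lst l + 1 := Finset.card_range _

end S12

namespace S12
open Finset

lemma bad_concat (s : List ℕ) (v w : ℕ) :
    bad (s ++ [v]) w ↔ bad s w ∨ (∃ i < s.length, s.getD i 0 = w ∧ v < w) := by
  constructor
  · rintro ⟨i, j, hij, hj, hieq, hjlt⟩
    have hj' : j < s.length + 1 := by simpa using hj
    rcases lt_or_ge j s.length with h | h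
    · rw [getD_concat_lt s v (by omega : i < s.length)] at hieq
      rw [getD_concat_lt s v h] at hjlt
      exact Or.inl ⟨i, j, hij, h, hieq, hjlt⟩
    · have : j = s.length := by omega
      subst this
      rw [getD_concat_lt s v (by omega : i < s.length)] at hieq
      rw [getD_concat_len] at hjlt
      exact Or.inr ⟨i, by omega, hieq, hjlt⟩
  · rintro (⟨i, j, hij, hj, hieq, hjlt⟩ | ⟨i, hi, hieq, hlt⟩)
    · exact ⟨i, j, hij, by simp; omega,
        by rw [getD_concat_lt s v (by omega : i < s.length)]; exact hieq,
        by rw [getD_concat_lt s v hj]; exact hjlt⟩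
    · exact ⟨i, s.length, hi, by simp,
        by rw [getD_concat_lt s v hi]; exact hieq,
        by rw [getD_concat_len]; exact hlt⟩

lemma bad_of_between {s : List ℕ} {w : ℕ} (h : Valid s) (h1 : lst s < w)
    (h2 : w ≤ ascList s) : bad s w := by
  obtain ⟨i, hi, hieq⟩ := occurs h w h2
  have hlen : 0 < s.length := List.length_pos_iff.mpr (Valid_ne_nil h)
  have hine : i ≠ s.length - 1 := by
    intro he; rw [he] at hieq
    change lst s = w at hieq; omega
  exact ⟨i, s.length - 1, by omega, by omega, hieq, show lst s < w from h1⟩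

lemma not_bad_top {s : List ℕ} (h : Valid s) : ¬ bad s (ascList s + 1) := by
  rintro ⟨i, j, hij, hj, hieq, -⟩
  have := entries_le h i (by omega)
  omega

lemma ext_char {s : List ℕ} (hs : Valid s) (v : ℕ) :
    Valid (s ++ [v]) ↔ v ∈ Allow s ∨ v = ascList s + 1 := by
  have hne := Valid_ne_nil hs
  constructor
  · intro h
    have hv : v ≤ ascList s + 1 := ((IsAscSeq_concat hne v).mp h.1).2
    have notbad : ¬ bad s v := fun hb => h.2 ((Contains101_concat v).mpr (Or.inr hb))
    rcases le_or_gt v (lst s) with hle | hgt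
    · exact Or.inl (mem_Allow.mpr ⟨hle, notbad⟩)
    · rcases Nat.lt_or_ge (ascList s) v with h1 | h1
      · exact Or.inr (by omega)
      · exact absurd (bad_of_between hs hgt h1) notbad
  · intro h
    have hIsAsc : IsAscSeq (s ++ [v]) := by
      rw [IsAscSeq_concat hne]
      refine ⟨hs.1, ?_⟩
      rcases h with h | h
      · rw [mem_Allow] at h
        have := lst_le_asc hs; omega
      · omega
    have hnb : ¬ bad s v := by
      rcases h with h | h
      · exact (mem_Allow.mp h).2
      · rw [h]; exact not_bad_top hs
    exact ⟨hIsAsc, fun hc => by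
      rcases (Contains101_concat v).mp hc with h' | h'
      exacts [hs.2 h', hnb h']⟩

lemma ext_nonasc {s : List ℕ} (hs : Valid s) {v : ℕ} (hv : v ∈ Allow s) :
    ascList (s ++ [v]) = ascList s ∧
    Allow (s ++ [v]) = (Allow s).filter (· ≤ v) := by
  classical
  obtain ⟨hvle, hnb⟩ := mem_Allow.mp hv
  have hne := Valid_ne_nil hs
  constructor
  · rw [ascList_concat hne]; simp [Nat.not_lt.mpr hvle]
  · ext w
    rw [mem_Allow, lst_concat, Finset.mem_filter, mem_Allow, bad_concat]
    constructor
    · rintro ⟨hwv, hnb'⟩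
      exact ⟨⟨le_trans hwv hvle, fun hb => hnb' (Or.inl hb)⟩, hwv⟩
    · rintro ⟨⟨hwl, hnbw⟩, hwv⟩
      refine ⟨hwv, ?_⟩
      rintro (hb | ⟨i, hi, hieq, hlt⟩)
      · exact hnbw hb
      · omega

lemma ext_asc {s : List ℕ} (hs : Valid s) :
    ascList (s ++ [ascList s + 1]) = ascList s + 1 ∧
    Allow (s ++ [ascList s + 1]) = insert (ascList s + 1) (Allow s) ∧
    label (s ++ [ascList s + 1]) = label s + 1 := by
  classical
  have hne := Valid_ne_nil hs
  have hlst : lst s ≤ ascList s := lst_le_asc hs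
  have hasc : ascList (s ++ [ascList s + 1]) = ascList s + 1 := by
    rw [ascList_concat hne]; simp [Nat.lt_succ_of_le hlst]
  have hAllow : Allow (s ++ [ascList s + 1]) = insert (ascList s + 1) (Allow s) := by
    ext w
    rw [mem_Allow, lst_concat, Finset.mem_insert, mem_Allow, bad_concat]
    constructor
    · rintro ⟨hwv, hnb'⟩
      have hnbw : ¬ bad s w := fun hb => hnb' (Or.inl hb)
      rcases eq_or_lt_of_le hwv with he | hlt
      · exact Or.inl he
      · right
        refine ⟨?_, hnbw⟩
        by_contra hgt
        exact hnbw (bad_of_between hs (by omega) (by omega))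
    · rintro (rfl | ⟨hwl, hnbw⟩)
      · refine ⟨le_rfl, ?_⟩
        rintro (hb | ⟨i, hi, hieq, hlt⟩)
        · exact not_bad_top hs hb
        · omega
      · refine ⟨by omega, ?_⟩
        rintro (hb | ⟨i, hi, hieq, hlt⟩)
        · exact hnbw hb
        · omega
  refine ⟨hasc, hAllow, ?_⟩
  rw [label, hAllow, Finset.card_insert_of_notMem, label]
  intro hmem
  rw [mem_Allow] at hmem
  omega

end S12

namespace S12
open Finset

/-- rank of `v` within `Allow s` -/
noncomputable def rk (s : List ℕ) (v : ℕ) : ℕ := ((Allow s).filter (· ≤ v)).card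

lemma rk_le_label (s : List ℕ) (v : ℕ) : rk s v ≤ label s :=
  Finset.card_le_card (Finset.filter_subset _ _)

lemma rk_pos {s : List ℕ} {v : ℕ} (hv : v ∈ Allow s) : 1 ≤ rk s v :=
  Finset.card_pos.mpr ⟨v, Finset.mem_filter.mpr ⟨hv, by simp⟩⟩

lemma rk_lt_rk {s : List ℕ} {v v' : ℕ} (hv : v ∈ Allow s) (hv' : v' ∈ Allow s)
    (h : v < v') : rk s v < rk s v' := by
  apply Finset.card_lt_card
  have hsub : (Allow s).filter (· ≤ v) ⊆ (Allow s).filter (· ≤ v') := by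
    intro w hw
    rw [Finset.mem_filter] at hw ⊢
    exact ⟨hw.1, le_trans hw.2 h.le⟩
  refine (Finset.ssubset_iff_of_subset hsub).mpr ⟨v', Finset.mem_filter.mpr ⟨hv', le_rfl⟩, ?_⟩
  intro hmem
  have := (Finset.mem_filter.mp hmem).2
  omega

lemma rk_injOn (s : List ℕ) : Set.InjOn (rk s) (Allow s) := by
  intro v hv v' hv' he
  by_contra hne
  rcases Nat.lt_or_ge v v' with h | h
  · exact absurd he (Nat.ne_of_lt (rk_lt_rk hv hv' h))
  · have : v' < v := by omega
    exact absurd he.symm (Nat.ne_of_lt (rk_lt_rk hv' hv this))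

lemma rk_surj {s : List ℕ} {b : ℕ} (hb1 : 1 ≤ b) (hb2 : b ≤ label s) :
    ∃ v ∈ Allow s, rk s v = b := by
  classical
  have himg : (Allow s).image (rk s) ⊆ Finset.Icc 1 (label s) := by
    intro x hx
    rw [Finset.mem_image] at hx
    obtain ⟨v, hv, rfl⟩ := hx
    exact Finset.mem_Icc.mpr ⟨rk_pos hv, rk_le_label s v⟩
  have hcard : ((Allow s).image (rk s)).card = label s := by
    rw [Finset.card_image_of_injOn (rk_injOn s)]; rfl
  have : (Allow s).image (rk s) = Finset.Icc 1 (label s) := by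
    apply Finset.eq_of_subset_of_card_le himg
    rw [hcard, Nat.card_Icc]
    omega
  have hbmem : b ∈ (Allow s).image (rk s) := by
    rw [this]; exact Finset.mem_Icc.mpr ⟨hb1, hb2⟩
  rw [Finset.mem_image] at hbmem
  obtain ⟨v, hv, hveq⟩ := hbmem
  exact ⟨v, hv, hveq⟩

/- finiteness -/
lemma finite_len_lt : ∀ n m : ℕ, {l : List ℕ | l.length = n ∧ ∀ x ∈ l, x < m}.Finite := by
  intro n
  induction n with
  | zero =>
    intro m
    apply Set.Finite.subset (Set.finite_singleton ([] : List ℕ))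
    rintro l ⟨hl, -⟩
    simp [List.length_eq_zero_iff.mp hl]
  | succ n ih =>
    intro m
    have : {l : List ℕ | l.length = n + 1 ∧ ∀ x ∈ l, x < m} ⊆
        (fun p : ℕ × List ℕ => p.1 :: p.2) '' ({x | x < m} ×ˢ {l | l.length = n ∧ ∀ x ∈ l, x < m}) := by
      rintro l ⟨hl, hx⟩
      obtain ⟨y, t, rfl⟩ := List.exists_cons_of_ne_nil (l := l) (by
        intro h; rw [h] at hl; simp at hl)
      refine ⟨(y, t), ⟨?_, ?_, ?_⟩, rfl⟩
      · exact hx y (by simp)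
      · simpa using hl
      · intro x hxt; exact hx x (by simp [hxt])
    exact Set.Finite.subset (Set.Finite.image _ ((Set.finite_Iio m).prod (ih m))) this

def VSet (n a k : ℕ) : Set (List ℕ) := {l | l.length = n ∧ Valid l ∧ label l = a ∧ ascList l = k}

lemma valid_entries_lt {l : List ℕ} (h : Valid l) : ∀ x ∈ l, x < l.length := by
  intro x hx
  obtain ⟨i, hi, hieq⟩ := List.mem_iff_getElem.mp hx
  have h1 : l.getD i 0 = x := by rw [List.getD_eq_getElem l 0 hi]; exact hieq
  have h2 := entries_le h i hi
  have h3 := ascList_le l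
  rcases h3 with h3 | h3
  · omega
  · rw [h3] at hi; simp at hi

lemma VSet_subset (n a k : ℕ) : VSet n a k ⊆ {l : List ℕ | l.length = n ∧ ∀ x ∈ l, x < n} := by
  rintro l ⟨hl, hv, -, -⟩
  exact ⟨hl, fun x hx => hl ▸ valid_entries_lt hv x hx⟩

lemma VSet_finite (n a k : ℕ) : (VSet n a k).Finite :=
  Set.Finite.subset (finite_len_lt n n) (VSet_subset n a k)

/- disjoint union cardinality over a Finset index -/
lemma ncard_biUnion {α β : Type*} (F : Finset α) (S : α → Set β)
    (hfin : ∀ a, (S a).Finite)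
    (hdisj : ∀ a ∈ F, ∀ b ∈ F, a ≠ b → Disjoint (S a) (S b)) :
    (⋃ a ∈ F, S a).ncard = ∑ a ∈ F, (S a).ncard := by
  classical
  revert hdisj
  induction F using Finset.induction_on with
  | empty => simp
  | @insert a F hnotmem ih =>
    intro hdisj
    rw [Finset.sum_insert hnotmem]
    have hun : (⋃ x ∈ insert a F, S x) = S a ∪ ⋃ x ∈ F, S x := by
      simp [Set.biUnion_insert]
    have hd : Disjoint (S a) (⋃ x ∈ F, S x) := by
      rw [Set.disjoint_iff_inter_eq_empty]
      ext x
      simp only [Set.mem_inter_iff, Set.mem_iUnion, Set.mem_empty_iff_false, iff_false]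
      rintro ⟨hxa, b, hbF, hxb⟩
      have hne : a ≠ b := fun h => hnotmem (h ▸ hbF)
      exact Set.disjoint_left.mp
        (hdisj a (Finset.mem_insert_self a F) b (Finset.mem_insert_of_mem hbF) hne) hxa hxb
    rw [hun, Set.ncard_union_eq hd (hfin a)
        (Set.Finite.biUnion F.finite_toSet (fun i _ => hfin i)),
      ih (fun x hx y hy hxy =>
        hdisj x (Finset.mem_insert_of_mem hx) y (Finset.mem_insert_of_mem hy) hxy)]

end S12

namespace S12
open Finset

lemma dropLast_concat_lst {l : List ℕ} (h : l ≠ []) : l.dropLast ++ [lst l] = l := by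
  have h1 := List.dropLast_append_getLast h
  have h2 : lst l = l.getLast h := by
    conv_lhs => rw [← h1]
    rw [lst_concat]
  rw [h2, h1]

lemma VSet_rec (n c K : ℕ) (hn : 1 ≤ n) :
    (VSet (n+1) (c+1) K).ncard =
      (∑ a ∈ Finset.Icc (c+1) n, (VSet n a K).ncard) +
      (if 1 ≤ K then (VSet n c (K-1)).ncard else 0) := by
  classical
  set A : Set (List ℕ) := ⋃ a ∈ Finset.Icc (c+1) n, VSet n a K with hA
  set B : Set (List ℕ) := {s | 1 ≤ K ∧ s ∈ VSet n c (K-1)} with hB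
  have hBsub : B ⊆ VSet n c (K-1) := fun s hs => hs.2
  have hbij : Set.BijOn List.dropLast (VSet (n+1) (c+1) K) (A ∪ B) := by
    refine ⟨?_, ?_, ?_⟩
    · -- MapsTo
      rintro l ⟨hlen, hval, hlab, hasc⟩
      have hlne : l ≠ [] := by intro h; rw [h] at hlen; simp at hlen
      have hslen : l.dropLast.length = n := by
        rw [List.length_dropLast, hlen]; omega
      have hsne : l.dropLast ≠ [] := by
        intro h; rw [h] at hslen; simp at hslen; omega
      have hconcat : l.dropLast ++ [lst l] = l := dropLast_concat_lst hlne
      have hvs : Valid l.dropLast := by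
        apply Valid_drop hsne (lst l)
        rw [hconcat]; exact hval
      rcases (ext_char hvs (lst l)).mp (by rw [hconcat]; exact hval) with hAl | hT
      · obtain ⟨he1, he2⟩ := ext_nonasc hvs hAl
        have hascs : ascList l.dropLast = K := by
          rw [← hasc]
          conv_rhs => rw [← hconcat]
          rw [he1]
        have hlabl : rk l.dropLast (lst l) = c + 1 := by
          rw [← hlab]
          conv_rhs => rw [← hconcat]
          rw [label, he2]
          rfl
        have hub : label l.dropLast ≤ n := by
          have u1 := label_le (l := l.dropLast)
          have u2 := lst_le_asc hvs
          have u3 := ascList_le l.dropLast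
          rcases u3 with u3 | u3
          · omega
          · exact absurd u3 hsne
        left
        simp only [hA, Set.mem_iUnion]
        refine ⟨label l.dropLast, ?_, hslen, hvs, rfl, hascs⟩
        simp only [Finset.mem_coe, Finset.mem_Icc]
        constructor
        · rw [← hlabl]; exact rk_le_label _ _
        · exact hub
      · obtain ⟨he1, he2, he3⟩ := ext_asc hvs
        have h1 : ascList l = ascList l.dropLast + 1 := by
          conv_lhs => rw [← hconcat, hT]
          exact he1
        have h2 : label l = label l.dropLast + 1 := by
          conv_lhs => rw [← hconcat, hT]
          exact he3
        right
        exact ⟨by omega, hslen, hvs, by omega, by omega⟩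
    · -- InjOn
      intro l1 h1 l2 h2 heq
      obtain ⟨hlen1, hval1, hlab1, hasc1⟩ := h1
      obtain ⟨hlen2, hval2, hlab2, hasc2⟩ := h2
      have hlne1 : l1 ≠ [] := by intro h; rw [h] at hlen1; simp at hlen1
      have hlne2 : l2 ≠ [] := by intro h; rw [h] at hlen2; simp at hlen2
      have hcat1 : l1.dropLast ++ [lst l1] = l1 := dropLast_concat_lst hlne1
      have hcat2 : l2.dropLast ++ [lst l2] = l2 := dropLast_concat_lst hlne2
      set s := l1.dropLast with hsdef
      have hslen : s.length = n := by rw [hsdef, List.length_dropLast, hlen1]; omega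
      have hsne : s ≠ [] := by intro h; rw [h] at hslen; simp at hslen; omega
      rw [← heq] at hcat2
      have hvs : Valid s := by
        apply Valid_drop hsne (lst l1); rw [hcat1]; exact hval1
      have hc1 := (ext_char hvs (lst l1)).mp (by rw [hcat1]; exact hval1)
      have hc2 := (ext_char hvs (lst l2)).mp (by rw [hcat2]; exact hval2)
      have hveq : lst l1 = lst l2 := by
        rcases hc1 with hA1 | hT1 <;> rcases hc2 with hA2 | hT2
        · -- both allow
          apply rk_injOn s hA1 hA2
          have e1 : rk s (lst l1) = c + 1 := by
            rw [← hlab1]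
            conv_rhs => rw [← hcat1]
            rw [label, (ext_nonasc hvs hA1).2]; rfl
          have e2 : rk s (lst l2) = c + 1 := by
            rw [← hlab2]
            conv_rhs => rw [← hcat2]
            rw [label, (ext_nonasc hvs hA2).2]; rfl
          rw [e1, e2]
        · exfalso
          have e1 : rk s (lst l1) = c + 1 := by
            rw [← hlab1]
            conv_rhs => rw [← hcat1]
            rw [label, (ext_nonasc hvs hA1).2]; rfl
          have e2 : label l2 = label s + 1 := by
            conv_lhs => rw [← hcat2, hT2]
            exact (ext_asc hvs).2.2
          have := rk_le_label s (lst l1)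
          omega
        · exfalso
          have e2 : rk s (lst l2) = c + 1 := by
            rw [← hlab2]
            conv_rhs => rw [← hcat2]
            rw [label, (ext_nonasc hvs hA2).2]; rfl
          have e1 : label l1 = label s + 1 := by
            conv_lhs => rw [← hcat1, hT1]
            exact (ext_asc hvs).2.2
          have := rk_le_label s (lst l2)
          omega
        · rw [hT1, hT2]
      rw [← hcat1, ← hcat2, hveq]
    · -- SurjOn
      rintro s (hsA | hsB)
      · simp only [hA, Set.mem_iUnion] at hsA
        obtain ⟨a, haIcc, hslen, hvs, hlabs, hascs⟩ := hsA
        simp only [Finset.mem_coe, Finset.mem_Icc] at haIcc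
        obtain ⟨v, hvA, hrk⟩ := rk_surj (s := s) (by omega : 1 ≤ c + 1)
          (by rw [hlabs]; exact haIcc.1)
        refine ⟨s ++ [v], ⟨?_, ?_, ?_, ?_⟩, by simp [List.dropLast_concat]⟩
        · simp [hslen]
        · exact (ext_char hvs v).mpr (Or.inl hvA)
        · rw [label, (ext_nonasc hvs hvA).2]; exact hrk
        · rw [(ext_nonasc hvs hvA).1]; exact hascs
      · obtain ⟨hK, hslen, hvs, hlabs, hascs⟩ := hsB
        refine ⟨s ++ [ascList s + 1], ⟨?_, ?_, ?_, ?_⟩, by simp [List.dropLast_concat]⟩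
        · simp [hslen]
        · exact (ext_char hvs _).mpr (Or.inr rfl)
        · rw [(ext_asc hvs).2.2, hlabs]
        · rw [(ext_asc hvs).1, hascs]; omega
  have hAfin : A.Finite :=
    Set.Finite.biUnion (Finset.Icc (c+1) n).finite_toSet (fun a _ => VSet_finite n a K)
  have hBfin : B.Finite := Set.Finite.subset (VSet_finite n c (K-1)) hBsub
  have hdisj : Disjoint A B := by
    rw [Set.disjoint_left]
    rintro s hsA ⟨hK, hsB⟩
    simp only [hA, Set.mem_iUnion] at hsA
    obtain ⟨a, haIcc, -, -, hlabs, -⟩ := hsA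
    simp only [Finset.mem_coe, Finset.mem_Icc] at haIcc
    obtain ⟨-, -, hlabs', -⟩ := hsB
    omega
  have h1 : (VSet (n+1) (c+1) K).ncard = (A ∪ B).ncard := by
    rw [← hbij.image_eq, Set.ncard_image_of_injOn hbij.injOn]
  rw [h1, Set.ncard_union_eq hdisj hAfin hBfin]
  congr 1
  · rw [hA]
    apply ncard_biUnion
    · exact fun a => VSet_finite n a K
    · intro a _ b _ hab
      rw [Set.disjoint_left]
      rintro s ⟨-, -, hl1, -⟩ ⟨-, -, hl2, -⟩
      exact hab (hl1 ▸ hl2 ▸ rfl)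
  · rcases Nat.lt_or_ge K 1 with h | h
    · have hBe : B = ∅ := by
        rw [hB]; ext s; simp only [Set.mem_setOf_eq, Set.mem_empty_iff_false, iff_false]
        rintro ⟨h1, -⟩; omega
      rw [hBe, if_neg (by omega)]
      simp
    · have hBe : B = VSet n c (K-1) := by
        rw [hB]; ext s; simp [Set.mem_setOf_eq, h]
      rw [hBe, if_pos h]

end S12

namespace S12
open Finset

lemma valid_single : Valid [0] := by
  refine ⟨⟨by simp, rfl, ?_⟩, ?_⟩
  · intro i hi hlen; simp at hlen; omega
  · rintro ⟨i, j, k, hij, hjk, hk, -, -⟩; simp at hk; omega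

lemma label_single : label [0] = 1 := by
  have : Allow [0] = {0} := by
    ext w
    rw [mem_Allow]
    simp only [Finset.mem_singleton]
    constructor
    · rintro ⟨h1, -⟩; change w ≤ 0 at h1; omega
    · rintro rfl
      refine ⟨le_rfl, ?_⟩
      rintro ⟨i, j, hij, hj, -, -⟩
      simp at hj; omega
  rw [label, this]; rfl

lemma valid_len_one {l : List ℕ} (h1 : l.length = 1) (h2 : Valid l) : l = [0] := by
  obtain ⟨x, t, rfl⟩ := List.exists_cons_of_ne_nil (Valid_ne_nil h2)
  have ht : t = [] := by simpa using h1
  subst ht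
  have := h2.1.2.1
  simp at this
  rw [this]

lemma VSet_one (a k : ℕ) : VSet 1 a k = if a = 1 ∧ k = 0 then {[0]} else ∅ := by
  ext l
  simp only [VSet, Set.mem_setOf_eq]
  split_ifs with h
  · obtain ⟨rfl, rfl⟩ := h
    simp only [Set.mem_singleton_iff]
    constructor
    · rintro ⟨h1, h2, -, -⟩; exact valid_len_one h1 h2
    · rintro rfl
      exact ⟨rfl, valid_single, label_single, rfl⟩
  · simp only [Set.mem_empty_iff_false, iff_false]
    rintro ⟨h1, h2, h3, h4⟩
    have := valid_len_one h1 h2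
    subst this
    exact h ⟨by rw [← h3, label_single], by rw [← h4]; rfl⟩

def Nrec : ℕ → ℕ → ℕ → ℕ
  | _, 0, _ => 0
  | 0, _+1, _ => 0
  | 1, c+1, k => if c = 0 ∧ k = 0 then 1 else 0
  | (n+2), (c+1), k =>
      (∑ x ∈ Finset.Icc (c+1) (n+1), Nrec (n+1) x k) +
      (match k with
       | 0 => 0
       | (j+1) => Nrec (n+1) c j)
  termination_by n _ _ => n

lemma Nrec_zero_label (n k : ℕ) : Nrec n 0 k = 0 := by
  rw [Nrec.eq_def]

lemma Nrec_one (c k : ℕ) : Nrec 1 (c+1) k = if c = 0 ∧ k = 0 then 1 else 0 := by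
  rw [Nrec.eq_def]

lemma Nrec_succ (n c k : ℕ) : Nrec (n+2) (c+1) k =
    (∑ x ∈ Finset.Icc (c+1) (n+1), Nrec (n+1) x k) +
      (match k with
       | 0 => 0
       | (j+1) => Nrec (n+1) c j) := by
  rw [Nrec.eq_def]

lemma VSet_zero_label (n k : ℕ) : VSet n 0 k = ∅ := by
  ext l
  simp only [VSet, Set.mem_setOf_eq, Set.mem_empty_iff_false, iff_false]
  rintro ⟨-, h2, h3, -⟩
  have := label_pos h2
  omega

lemma VSet_card : ∀ n, 1 ≤ n → ∀ a k, (VSet n a k).ncard = Nrec n a k := by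
  intro n
  induction n with
  | zero => omega
  | succ n ih =>
    intro hn a k
    rcases Nat.eq_zero_or_pos a with rfl | ha
    · rw [VSet_zero_label, Nrec_zero_label, Set.ncard_empty]
    obtain ⟨c, rfl⟩ := Nat.exists_eq_add_of_lt ha
    rw [Nat.zero_add] at *
    rcases Nat.eq_zero_or_pos n with rfl | hn'
    · rw [Nrec_one, VSet_one]
      split_ifs with h1 h2 h2
      · exact Set.ncard_singleton _
      · exact absurd ⟨by omega, h1.2⟩ h2
      · exact absurd ⟨by omega, h2.2⟩ h1
      · exact Set.ncard_empty _
    · obtain ⟨n', rfl⟩ := Nat.exists_eq_add_of_lt hn'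
      rw [Nat.zero_add] at *
      rw [Nrec_succ, VSet_rec _ _ _ (by omega)]
      congr 1
      · apply Finset.sum_congr rfl
        intro x hx
        exact ih (by omega) x k
      · cases k with
        | zero => simp
        | succ j =>
          simp only [Nat.add_sub_cancel, if_pos (by omega : 1 ≤ j + 1)]
          exact ih (by omega) c j

lemma Nrec_van_k : ∀ n a k, n ≤ k → Nrec n a k = 0 := by
  intro n
  induction n with
  | zero => intro a k _; rw [Nrec.eq_def]; rcases a with _ | c <;> rfl
  | succ n ih =>
    intro a k hk
    rcases Nat.eq_zero_or_pos a with rfl | ha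
    · exact Nrec_zero_label _ _
    obtain ⟨c, rfl⟩ := Nat.exists_eq_add_of_lt ha
    rw [Nat.zero_add] at *
    rcases Nat.eq_zero_or_pos n with rfl | hn'
    · rw [Nrec_one, if_neg (by omega)]
    obtain ⟨n', rfl⟩ := Nat.exists_eq_add_of_lt hn'
    rw [Nat.zero_add] at *
    rw [Nrec_succ]
    have h1 : ∀ x ∈ Finset.Icc (c+1) (n'+1), Nrec (n'+1) x k = 0 :=
      fun x _ => ih x k (by omega)
    rw [Finset.sum_congr rfl h1, Finset.sum_const_zero]
    cases k with
    | zero => rfl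
    | succ j => simp only [Nat.zero_add]; rw [ih c j (by omega)]

lemma Nrec_van_a : ∀ n a k, k + 2 ≤ a → Nrec n a k = 0 := by
  intro n
  induction n with
  | zero => intro a k _; rw [Nrec.eq_def]; rcases a with _ | c <;> rfl
  | succ n ih =>
    intro a k ha
    obtain ⟨c, rfl⟩ := Nat.exists_eq_add_of_lt (show 0 < a by omega)
    rw [Nat.zero_add] at *
    rcases Nat.eq_zero_or_pos n with rfl | hn'
    · rw [Nrec_one, if_neg (by omega)]
    obtain ⟨n', rfl⟩ := Nat.exists_eq_add_of_lt hn'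
    rw [Nat.zero_add] at *
    rw [Nrec_succ]
    have h1 : ∀ x ∈ Finset.Icc (c+1) (n'+1), Nrec (n'+1) x k = 0 :=
      fun x hx => ih x k (by simp only [Finset.mem_Icc] at hx; omega)
    rw [Finset.sum_congr rfl h1, Finset.sum_const_zero]
    cases k with
    | zero => rfl
    | succ j => simp only [Nat.zero_add]; rw [ih c j (by omega)]

lemma Nrec_CF1 : ∀ k a, Nrec (k+1) a k = if a = k + 1 then 1 else 0 := by
  intro k
  induction k with
  | zero =>
    intro a
    cases a with
    | zero => rw [Nrec_zero_label]; simp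
    | succ c => rw [Nrec_one]; by_cases h : c = 0 <;> simp [h]
  | succ k ih =>
    intro a
    rcases Nat.eq_zero_or_pos a with rfl | ha
    · rw [Nrec_zero_label]; simp
    obtain ⟨c, rfl⟩ := Nat.exists_eq_add_of_lt ha
    rw [Nat.zero_add] at *
    rw [Nrec_succ]
    have h1 : ∀ x ∈ Finset.Icc (c+1) (k+1), Nrec (k+1) x (k+1) = 0 :=
      fun x _ => Nrec_van_k (k+1) x (k+1) le_rfl
    rw [Finset.sum_congr rfl h1, Finset.sum_const_zero]
    simp only [Nat.zero_add]
    rcases Nat.eq_zero_or_pos c with rfl | hc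
    · rw [Nrec_zero_label]
      simp
    obtain ⟨e, rfl⟩ := Nat.exists_eq_add_of_lt hc
    rw [Nat.zero_add] at *
    rw [ih (e+1)]
    by_cases h : e + 1 = k + 1 <;> simp [h] <;> omega

end S12

namespace S12
open Finset

lemma HS1 (p : ℕ) : ∀ J, ∑ j ∈ Finset.range (J+1), (p+j).choose j = (p+J+1).choose J := by
  intro J
  induction J with
  | zero => simp
  | succ J ih =>
    rw [Finset.sum_range_succ, ih]
    have h := Nat.choose_succ_succ (p+J+1) J
    simp only [Nat.succ_eq_add_one] at h
    have e : p + (J+1) = p + J + 1 := by omega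
    rw [e]
    omega

lemma HS2 (p : ℕ) : ∀ J, ∑ j ∈ Finset.range (J+1), j * (p+j).choose j
    = (p+1) * (p+J+1).choose (p+2) := by
  intro J
  induction J with
  | zero => simp [Nat.choose_eq_zero_of_lt (show p+1 < p+2 by omega)]
  | succ J ih =>
    rw [Finset.sum_range_succ, ih]
    have e : p + (J+1) = p + J + 1 := by omega
    rw [e]
    have h1 : (p+J+1).choose (J+1) * (J+1) = (p+J+1).choose J * (p+1) := by
      have := Nat.choose_succ_right_eq (p+J+1) J
      have e2 : p + J + 1 - J = p + 1 := by omega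
      rw [e2] at this
      exact this
    have h2 : (p+J+1).choose J = (p+J+1).choose (p+1) := by
      have := Nat.choose_symm (show J ≤ p+J+1 by omega)
      have e3 : p + J + 1 - J = p + 1 := by omega
      rw [e3] at this
      exact this.symm
    have h3 : (p+J+2).choose (p+2) = (p+J+1).choose (p+1) + (p+J+1).choose (p+2) := by
      have h := Nat.choose_succ_succ (p+J+1) (p+1)
      simpa [Nat.succ_eq_add_one] using h
    calc (p+1) * (p+J+1).choose (p+2) + (J+1) * (p+J+1).choose (J+1)
        = (p+1) * (p+J+1).choose (p+2) + (p+J+1).choose (J+1) * (J+1) := by ring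
      _ = (p+1) * (p+J+1).choose (p+2) + (p+J+1).choose J * (p+1) := by rw [h1]
      _ = (p+1) * ((p+J+1).choose (p+2) + (p+J+1).choose (p+1)) := by rw [h2]; ring
      _ = (p+1) * (p+J+2).choose (p+2) := by rw [h3]; ring

lemma HS3 (p k J : ℕ) (hJ : J ≤ k) :
    (∑ j ∈ Finset.range (J+1), (k+1-j) * (p+j).choose j) + (p+1) * (p+J+1).choose (p+2)
      = (k+1) * (p+J+1).choose J := by
  have key : (∑ j ∈ Finset.range (J+1), (k+1-j) * (p+j).choose j)
      + (∑ j ∈ Finset.range (J+1), j * (p+j).choose j)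
      = (k+1) * (p+J+1).choose J := by
    rw [← Finset.sum_add_distrib, ← HS1 p J, Finset.mul_sum]
    apply Finset.sum_congr rfl
    intro j hj
    simp only [Finset.mem_range] at hj
    rw [← Nat.add_mul]
    congr 1
    omega
  rw [HS2 p J] at key
  exact key

end S12

namespace S12
open Finset

lemma sum_CF1 (d J : ℕ) :
    (∑ x ∈ Finset.Icc (d+1) (J+d+1), Nrec (J+d+1) x (J+d)) = 1 := by
  rw [Finset.sum_congr rfl (fun x _ => Nrec_CF1 (J+d) x)]
  rw [Finset.sum_ite_eq' (Finset.Icc (d+1) (J+d+1)) (J+d+1) (fun _ => 1)]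
  rw [if_pos (Finset.mem_Icc.mpr ⟨by omega, le_rfl⟩)]

lemma Nrec_CF2 : ∀ n, ∀ p J d, n = J + d + p + 2 →
    (J + d + 1) * Nrec n (d+1) (J+d) =
      (d+1) * (J+d+p+1).choose (J+d) * (p+J).choose J := by
  intro n
  induction n using Nat.strong_induction_on with
  | _ n IH =>
  intro p J d hn
  rcases p with _ | q
  · -- base case m = 0 : n = J+d+2
    subst hn
    simp only [Nat.add_zero, Nat.zero_add]
    have hrw : J + d + 2 = (J + d) + 2 := rfl
    rw [Nrec_succ (J+d) d (J+d), sum_CF1 d J]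
    have hS2 : (match J + d with
       | 0 => 0
       | (j+1) => Nrec (J+d+1) d j) = d := by
      rcases d with _ | e
      · -- d = 0
        rcases J with _ | Jj
        · rfl
        · show Nrec (Jj+1+1) 0 Jj = 0
          exact Nrec_zero_label _ _
      · -- d = e+1
        show Nrec (J+(e+1)+1) (e+1) (J+e) = e+1
        have hIH := IH (J+e+2) (by omega) 0 J e rfl
        simp only [Nat.add_zero, Nat.zero_add] at hIH
        rw [Nat.choose_succ_self_right, Nat.choose_self] at hIH
        have harg : J + (e+1) + 1 = J + e + 2 := by omega
        rw [harg]
        have : (J+e+1) * Nrec (J+e+2) (e+1) (J+e) = (J+e+1) * (e+1) := by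
          rw [hIH]; ring
        exact Nat.eq_of_mul_eq_mul_left (by omega) this
    rw [hS2, Nat.choose_succ_self_right, Nat.choose_self]
    ring
  · -- inductive case m = q+1 : n = J+d+q+3
    subst hn
    have hrw : J + d + (q+1) + 2 = (J + d + q + 1) + 2 := by omega
    rw [hrw, Nrec_succ (J+d+q+1) d (J+d)]
    -- S1 truncation and reindex
    have htrunc : (∑ x ∈ Finset.Icc (d+1) (J+d+q+2), Nrec (J+d+q+2) x (J+d))
        = ∑ x ∈ Finset.Icc (d+1) (J+d+1), Nrec (J+d+q+2) x (J+d) := by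
      symm
      apply Finset.sum_subset (Finset.Icc_subset_Icc le_rfl (by omega))
      intro x hx hnx
      simp only [Finset.mem_Icc] at hx hnx
      exact Nrec_van_a _ _ _ (by omega)
    set S1 := ∑ x ∈ Finset.Icc (d+1) (J+d+1), Nrec (J+d+q+2) x (J+d) with hS1def
    -- pointwise IH on the reindexed sum
    have hmul : (J+d+1) * S1
        = ∑ j ∈ Finset.range (J+1), ((J+d+1-j) * (q+j).choose j) * ((J+d+q+1).choose (J+d)) := by
      rw [hS1def, Finset.mul_sum]
      apply Finset.sum_nbij' (i := fun x => J+d+1-x) (j := fun jj => J+d+1-jj)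
      · intro a ha
        simp only [Finset.mem_Icc] at ha
        simp only [Finset.mem_range]
        omega
      · intro a ha
        simp only [Finset.mem_range] at ha
        simp only [Finset.mem_Icc]
        omega
      · intro a ha
        simp only [Finset.mem_Icc] at ha
        omega
      · intro a ha
        simp only [Finset.mem_range] at ha
        omega
      · intro x hx
        simp only [Finset.mem_Icc] at hx
        -- (J+d+1) * Nrec (J+d+q+2) x (J+d) = ((J+d+1-(J+d+1-x)) * choose ...) * ...
        obtain ⟨e, rfl⟩ := Nat.exists_eq_add_of_lt (show 0 < x by omega)
        rw [Nat.zero_add] at *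
        have hIH := IH (J+d+q+2) (by omega) q (J+d-e) e (by omega)
        have h1 : J + d - e + e = J + d := by omega
        rw [h1] at hIH
        have h4 : J + d + 1 - (e+1) = J + d - e := by omega
        have h5 : J + d + 1 - (J + d - e) = e + 1 := by omega
        rw [h4, h5, hIH]
        ring
    rw [htrunc]
    have hF1 : (J+d+1) * S1 + (q+1) * ((q+J+1).choose (q+2)) * ((J+d+q+1).choose (J+d))
        = (J+d+1) * ((q+J+1).choose J) * ((J+d+q+1).choose (J+d)) := by
      have h := HS3 q (J+d) J (by omega)
      have h2 : ((∑ j ∈ Finset.range (J+1), (J+d+1-j) * (q+j).choose j)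
            + (q+1) * (q+J+1).choose (q+2)) * ((J+d+q+1).choose (J+d))
          = ((J+d+1) * (q+J+1).choose J) * ((J+d+q+1).choose (J+d)) := by rw [h]
      rw [add_mul, Finset.sum_mul] at h2
      rw [hmul]
      calc (∑ j ∈ Finset.range (J+1), ((J+d+1-j) * (q+j).choose j) * ((J+d+q+1).choose (J+d)))
            + (q+1) * ((q+J+1).choose (q+2)) * ((J+d+q+1).choose (J+d))
          = ((J+d+1) * (q+J+1).choose J) * ((J+d+q+1).choose (J+d)) := by
            rw [← h2]
        _ = (J+d+1) * ((q+J+1).choose J) * ((J+d+q+1).choose (J+d)) := by ring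
    have hf5 : (q+J+1).choose (q+2) * (q+2) = (q+J+1).choose J * J := by
      have h1 := Nat.choose_succ_right_eq (q+J+1) (q+1)
      have e1 : q + J + 1 - (q+1) = J := by omega
      have e3 : q + 1 + 1 = q + 2 := by omega
      rw [e1, e3] at h1
      have h2 := Nat.choose_symm (show J ≤ q+J+1 by omega)
      have e2 : q + J + 1 - J = q + 1 := by omega
      rw [e2] at h2
      rw [h2] at h1
      exact h1
    rcases d with _ | e
    · rcases J with _ | Jj
      · -- J = 0, d = 0
        simp only [Nat.zero_add, Nat.add_zero] at hF1 ⊢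
        rw [Nat.choose_eq_zero_of_lt (by omega : q + 1 < q + 2)] at hF1
        simp only [Nat.choose_zero_right, Nat.mul_zero, Nat.zero_mul, Nat.mul_one,
          Nat.one_mul, Nat.add_zero] at hF1 ⊢
        omega
      · -- d = 0, J = Jj + 1
        simp only [Nat.add_zero] at hF1 ⊢
        rw [Nrec_zero_label]
        rw [show Jj+1+(q+1)+1 = Jj+q+3 from by omega,
            show (q+1)+(Jj+1) = q+Jj+2 from by omega]
        rw [show Jj+1+q+1 = Jj+q+2 from by omega,
            show q+(Jj+1)+1 = q+Jj+2 from by omega] at hF1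
        rw [show q+(Jj+1)+1 = q+Jj+2 from by omega] at hf5
        have hf4 : (Jj+q+2).choose (Jj+1) * (Jj+1) = (Jj+q+2).choose Jj * (q+2) := by
          have h1 := Nat.choose_succ_right_eq (Jj+q+2) Jj
          have e1 : Jj + q + 2 - Jj = q + 2 := by omega
          rw [e1] at h1
          exact h1
        have hf3 : (Jj+q+3).choose (Jj+1) = (Jj+q+2).choose Jj + (Jj+q+2).choose (Jj+1) := by
          have h := Nat.choose_succ_succ (Jj+q+2) Jj
          simp only [Nat.succ_eq_add_one] at h
          rw [show Jj+q+2+1 = Jj+q+3 from by omega] at h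
          exact h
        have c1 := congrArg (fun x : ℕ => (x:ℚ)) hF1
        have c3 := congrArg (fun x : ℕ => (x:ℚ)) hf3
        have c4 := congrArg (fun x : ℕ => (x:ℚ)) hf4
        have c5 := congrArg (fun x : ℕ => (x:ℚ)) hf5
        push_cast at c1 c3 c4 c5
        have hnz : ((q:ℚ)+2) ≠ 0 := by positivity
        have keyq : ((q:ℚ)+2) * (((Jj:ℚ)+1+1) * ((S1:ℕ):ℚ))
            = ((q:ℚ)+2) * (1 * (((Jj+q+3).choose (Jj+1) : ℕ):ℚ) * (((q+Jj+2).choose (Jj+1) : ℕ):ℚ)) := by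
          linear_combination ((q:ℚ)+2)*c1 - ((q:ℚ)+2)*(((q+Jj+2).choose (Jj+1) : ℕ):ℚ)*c3
            + (((q+Jj+2).choose (Jj+1) : ℕ):ℚ)*c4
            - ((q:ℚ)+1)*(((Jj+q+2).choose (Jj+1) : ℕ):ℚ)*c5
        have keyq' := mul_left_cancel₀ hnz keyq
        have goalN : (Jj+1+1) * (S1 + 0) = 1 * (Jj+q+3).choose (Jj+1) * (q+Jj+2).choose (Jj+1) := by
          exact_mod_cast keyq'
        simpa using goalN
    · -- d = e + 1
      rw [show J+(e+1) = J+e+1 from by omega] at hF1 ⊢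
      rw [show J+e+1+q+1 = J+e+q+2 from by omega] at hF1 ⊢
      rw [show J+e+q+2+1 = J+e+q+3 from by omega,
          show J+e+1+(q+1)+1 = J+e+q+3 from by omega,
          show (q+1)+J = q+J+1 from by omega]
      have hS2 : (match J+e+1 with
          | 0 => 0
          | (j+1) => Nrec (J+e+q+3) (e+1) j) = Nrec (J+e+q+3) (e+1) (J+e) := rfl
      rw [hS2]
      have hIH2 := IH (J+e+(q+1)+2) (by omega) (q+1) J e rfl
      rw [show J+e+(q+1)+2 = J+e+q+3 from by omega,
          show J+e+(q+1)+1 = J+e+q+2 from by omega,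
          show (q+1)+J = q+J+1 from by omega] at hIH2
      have hf4 : (J+e+q+2).choose (J+e+1) * (J+e+1) = (J+e+q+2).choose (J+e) * (q+2) := by
        have h1 := Nat.choose_succ_right_eq (J+e+q+2) (J+e)
        have e1 : J + e + q + 2 - (J+e) = q + 2 := by omega
        rw [e1] at h1
        exact h1
      have hf3 : (J+e+q+3).choose (J+e+1)
          = (J+e+q+2).choose (J+e) + (J+e+q+2).choose (J+e+1) := by
        have h := Nat.choose_succ_succ (J+e+q+2) (J+e)
        simp only [Nat.succ_eq_add_one] at h
        rw [show J+e+q+2+1 = J+e+q+3 from by omega] at h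
        exact h
      have c1 := congrArg (fun x : ℕ => (x:ℚ)) hF1
      have c2 := congrArg (fun x : ℕ => (x:ℚ)) hIH2
      have c3 := congrArg (fun x : ℕ => (x:ℚ)) hf3
      have c4 := congrArg (fun x : ℕ => (x:ℚ)) hf4
      have c5 := congrArg (fun x : ℕ => (x:ℚ)) hf5
      push_cast at c1 c2 c3 c4 c5
      have hnz : (((q:ℚ)+2) * ((J:ℚ)+e+1)) ≠ 0 := by positivity
      have keyq : (((q:ℚ)+2) * ((J:ℚ)+e+1)) * (((J:ℚ)+e+1+1) * (((S1:ℕ):ℚ) + ((Nrec (J+e+q+3) (e+1) (J+e) : ℕ):ℚ)))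
          = (((q:ℚ)+2) * ((J:ℚ)+e+1)) * (((e:ℚ)+1+1) * (((J+e+q+3).choose (J+e+1) : ℕ):ℚ) * (((q+J+1).choose J : ℕ):ℚ)) := by
        linear_combination (((q:ℚ)+2)*((J:ℚ)+e+1))*c1 + (((q:ℚ)+2)*((J:ℚ)+e+2))*c2
          - (((q:ℚ)+2)*((J:ℚ)+e+1)*((e:ℚ)+2)*(((q+J+1).choose J : ℕ):ℚ))*c3
          + ((J:ℚ)*(((q+J+1).choose J : ℕ):ℚ))*c4
          - (((J:ℚ)+e+1)*((q:ℚ)+1)*(((J+e+q+2).choose (J+e+1) : ℕ):ℚ))*c5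
      have keyq' := mul_left_cancel₀ hnz keyq
      exact_mod_cast keyq'

end S12

namespace S12
open Finset

def ASet (n k : ℕ) : Set (List ℕ) := {l | l.length = n ∧ Valid l ∧ ascList l = k}

lemma label_le_len {l : List ℕ} (h : Valid l) : label l ≤ l.length := by
  have h1 := label_le (l := l)
  have h2 := lst_le_asc h
  have h3 := ascList_le l
  rcases h3 with h3 | h3
  · omega
  · exact absurd h3 (Valid_ne_nil h)

lemma ASet_eq (n k : ℕ) : ASet n k = ⋃ a ∈ Finset.Icc 1 n, VSet n a k := by
  ext l
  simp only [ASet, Set.mem_setOf_eq, Set.mem_iUnion, Finset.mem_coe, Finset.mem_Icc]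
  constructor
  · rintro ⟨h1, h2, h3⟩
    exact ⟨label l, ⟨label_pos h2, h1 ▸ label_le_len h2⟩, h1, h2, rfl, h3⟩
  · rintro ⟨a, -, h1, h2, -, h3⟩
    exact ⟨h1, h2, h3⟩

lemma ASet_finite (n k : ℕ) : (ASet n k).Finite := by
  rw [ASet_eq]
  exact Set.Finite.biUnion (Finset.Icc 1 n).finite_toSet (fun a _ => VSet_finite n a k)

lemma ASet_ncard (n k : ℕ) (hn : 1 ≤ n) :
    (ASet n k).ncard = ∑ a ∈ Finset.Icc 1 n, Nrec n a k := by
  rw [ASet_eq, ncard_biUnion _ _ (fun a => VSet_finite n a k)]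
  · exact Finset.sum_congr rfl (fun a _ => VSet_card n hn a k)
  · intro a _ b _ hab
    rw [Set.disjoint_left]
    rintro s ⟨-, -, hl1, -⟩ ⟨-, -, hl2, -⟩
    exact hab (hl1 ▸ hl2 ▸ rfl)

lemma ASet_ncard_trunc (n k : ℕ) (hn : 1 ≤ n) (hk : k + 1 ≤ n) :
    (ASet n k).ncard = ∑ a ∈ Finset.Icc 1 (k+1), Nrec n a k := by
  rw [ASet_ncard n k hn]
  symm
  apply Finset.sum_subset (Finset.Icc_subset_Icc le_rfl hk)
  intro x hx hnx
  simp only [Finset.mem_Icc] at hx hnx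
  exact Nrec_van_a _ _ _ (by omega)

lemma key_count (n k : ℕ) (hn : 1 ≤ n) :
    n * (ASet n k).ncard = n.choose (k+1) * n.choose k := by
  rcases Nat.lt_or_ge n (k+1) with hbig | h
  · -- k ≥ n : empty set, zero binomial
    have he : ASet n k = ∅ := by
      ext l
      simp only [ASet, Set.mem_setOf_eq, Set.mem_empty_iff_false, iff_false]
      rintro ⟨h1, h2, h3⟩
      have h4 := ascList_le l
      rcases h4 with h4 | h4
      · omega
      · exact absurd h4 (Valid_ne_nil h2)
    rw [he, Set.ncard_empty, Nat.choose_eq_zero_of_lt hbig]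
    ring
  · rcases Nat.eq_or_lt_of_le h with heq | hlt
    · -- n = k+1
      subst heq
      rw [ASet_ncard_trunc _ _ hn le_rfl]
      rw [Finset.sum_congr rfl (fun a _ => Nrec_CF1 k a)]
      rw [Finset.sum_ite_eq' (Finset.Icc 1 (k+1)) (k+1) (fun _ => 1)]
      rw [if_pos (Finset.mem_Icc.mpr ⟨by omega, le_rfl⟩)]
      rw [Nat.choose_self, Nat.choose_succ_self_right]
      ring
    · -- n ≥ k+2
      obtain ⟨m, rfl⟩ : ∃ m, n = k + m + 2 := ⟨n - k - 2, by omega⟩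
      rw [ASet_ncard_trunc _ _ hn (by omega)]
      set S := ∑ a ∈ Finset.Icc 1 (k+1), Nrec (k+m+2) a k with hSdef
      have hmul2 : (k+1) * S
          = ∑ j ∈ Finset.range (k+1), ((k+1-j) * (m+j).choose j) * ((k+m+1).choose k) := by
        rw [hSdef, Finset.mul_sum]
        apply Finset.sum_nbij' (i := fun a => k+1-a) (j := fun jj => k+1-jj)
        · intro a ha
          simp only [Finset.mem_Icc] at ha
          simp only [Finset.mem_range]
          omega
        · intro a ha
          simp only [Finset.mem_range] at ha
          simp only [Finset.mem_Icc]
          omega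
        · intro a ha
          simp only [Finset.mem_Icc] at ha
          omega
        · intro a ha
          simp only [Finset.mem_range] at ha
          omega
        · intro a ha
          simp only [Finset.mem_Icc] at ha
          obtain ⟨e, rfl⟩ := Nat.exists_eq_add_of_lt (show 0 < a by omega)
          rw [Nat.zero_add] at *
          have hCF := Nrec_CF2 (k+m+2) m (k-e) e (by omega)
          have h1 : k - e + e = k := by omega
          rw [h1] at hCF
          have h4 : k + 1 - (e+1) = k - e := by omega
          have h5 : k + 1 - (k - e) = e + 1 := by omega
          rw [h4, h5, hCF]
          ring
      -- HS3 instance multiplied by A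
      have hF1 : (k+1) * S + (m+1) * ((k+m+1).choose (m+2)) * ((k+m+1).choose k)
          = (k+1) * ((k+m+1).choose k) * ((k+m+1).choose k) := by
        have h := HS3 m k k le_rfl
        rw [show m+k+1 = k+m+1 from by omega] at h
        have h2 : ((∑ j ∈ Finset.range (k+1), (k+1-j) * (m+j).choose j)
              + (m+1) * (k+m+1).choose (m+2)) * ((k+m+1).choose k)
            = ((k+1) * (k+m+1).choose k) * ((k+m+1).choose k) := by rw [h]
        rw [add_mul, Finset.sum_mul] at h2
        rw [hmul2]
        calc (∑ j ∈ Finset.range (k+1), ((k+1-j) * (m+j).choose j) * ((k+m+1).choose k))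
              + (m+1) * ((k+m+1).choose (m+2)) * ((k+m+1).choose k)
            = ((k+1) * (k+m+1).choose k) * ((k+m+1).choose k) := by
              rw [← h2]
          _ = (k+1) * ((k+m+1).choose k) * ((k+m+1).choose k) := by ring
      have fsym : (k+m+1).choose (m+1) = (k+m+1).choose k := by
        have h := Nat.choose_symm (show k ≤ k+m+1 by omega)
        rw [show k+m+1-k = m+1 from by omega] at h
        exact h
      have fE : (k+m+1).choose (m+2) * (m+2) = (k+m+1).choose k * k := by
        have h1 := Nat.choose_succ_right_eq (k+m+1) (m+1)
        rw [show k+m+1-(m+1) = k from by omega, show m+1+1 = m+2 from by omega, fsym] at h1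
        exact h1
      have fP1 : (k+m+2) * (k+m+1).choose k = (k+m+2).choose (k+1) * (k+1) := by
        have h := Nat.add_one_mul_choose_eq (k+m+1) k
        rw [show k+m+1+1 = k+m+2 from by omega] at h
        exact h
      have fP2 : (k+m+2).choose k = (k+m+1).choose k + (k+m+1).choose (m+2) := by
        have h1 := Nat.choose_succ_succ (k+m+1) (m+1)
        simp only [Nat.succ_eq_add_one] at h1
        rw [show k+m+1+1 = k+m+2 from by omega, show m+1+1 = m+2 from by omega, fsym] at h1
        have h2 := Nat.choose_symm (show k ≤ k+m+2 by omega)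
        rw [show k+m+2-k = m+2 from by omega] at h2
        rw [← h2]
        exact h1
      -- assemble over ℚ
      have c1 := congrArg (fun x : ℕ => (x:ℚ)) hF1
      have cE := congrArg (fun x : ℕ => (x:ℚ)) fE
      have cP1 := congrArg (fun x : ℕ => (x:ℚ)) fP1
      have cP2 := congrArg (fun x : ℕ => (x:ℚ)) fP2
      push_cast at c1 cE cP1 cP2
      have hnz : (((k:ℚ)+1) * ((m:ℚ)+2)) ≠ 0 := by positivity
      have keyq : (((k:ℚ)+1) * ((m:ℚ)+2)) * (((k:ℚ)+m+2) * ((S:ℕ):ℚ))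
          = (((k:ℚ)+1) * ((m:ℚ)+2)) *
            ((((k+m+2).choose (k+1) : ℕ):ℚ) * (((k+m+2).choose k : ℕ):ℚ)) := by
        linear_combination (((m:ℚ)+2)*((k:ℚ)+m+2))*c1
          + (((m:ℚ)+2)*(((k+m+2).choose k : ℕ):ℚ))*cP1
          - (((m:ℚ)+2)*((k:ℚ)+m+2)*(((k+m+1).choose k : ℕ):ℚ))*cP2
          - (((m:ℚ)+2)*((k:ℚ)+m+2)*(((k+m+1).choose k : ℕ):ℚ))*cE
      have keyq' := mul_left_cancel₀ hnz keyq
      exact_mod_cast keyq'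

end S12

namespace S12
open Finset

lemma vand (n : ℕ) : ∑ k ∈ Finset.range n, n.choose (k+1) * n.choose k = (2*n).choose (n+1) := by
  rw [two_mul, Nat.add_choose_eq, Finset.Nat.sum_antidiagonal_eq_sum_range_succ_mk]
  have e1 : (n+1).succ = n + 2 := rfl
  rw [e1]
  rw [Finset.sum_range_succ' (fun i => n.choose i * n.choose (n+1-i)) (n+1)]
  rw [Finset.sum_range_succ]
  rw [Nat.choose_eq_zero_of_lt (show n < n + 1 - 0 by omega)]
  rw [Nat.choose_eq_zero_of_lt (show n < n + 1 by omega)]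
  simp only [Nat.mul_zero, Nat.zero_mul, Nat.add_zero]
  symm
  apply Finset.sum_congr rfl
  intro k hk
  simp only [Finset.mem_range] at hk
  have e2 : n + 1 - (k + 1) = n - k := by omega
  rw [e2]
  have e3 : n.choose (n - k) = n.choose k := Nat.choose_symm (by omega)
  rw [e3]

lemma total_catalan (n : ℕ) (hn : 1 ≤ n) :
    ∑ k ∈ Finset.range n, (ASet n k).ncard = catalan n := by
  have h1 : n * ∑ k ∈ Finset.range n, (ASet n k).ncard
      = ∑ k ∈ Finset.range n, n.choose (k+1) * n.choose k := by
    rw [Finset.mul_sum]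
    exact Finset.sum_congr rfl (fun k _ => key_count n k hn)
  have h3 : (2*n).choose (n+1) * (n+1) = (2*n).choose n * n := by
    have h := Nat.choose_succ_right_eq (2*n) n
    rw [show 2*n - n = n from by omega] at h
    exact h
  have h4 : (n+1) * catalan n = (2*n).choose n := by
    rw [succ_mul_catalan_eq_centralBinom, Nat.centralBinom_eq_two_mul_choose]
  apply Nat.eq_of_mul_eq_mul_left (show 0 < n*(n+1) by positivity)
  calc n*(n+1) * (∑ k ∈ Finset.range n, (ASet n k).ncard)
      = (n+1) * (n * ∑ k ∈ Finset.range n, (ASet n k).ncard) := by ring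
    _ = (n+1) * ((2*n).choose (n+1)) := by rw [h1, vand n]
    _ = (2*n).choose (n+1) * (n+1) := by ring
    _ = (2*n).choose n * n := h3
    _ = n * ((n+1) * catalan n) := by rw [h4]; ring
    _ = n*(n+1) * catalan n := by ring

end S12

/-- The 101-avoiding ascent sequences of length `n` are counted by the Catalan number,
and those with exactly `k` ascents by the Narayana number `N(n, k+1)`. -/
theorem stmt12 (n : ℕ) (hn : 1 ≤ n) :
    {l : List ℕ | l.length = n ∧ IsAscSeq l ∧ ¬ Contains101 l}.ncard = catalan n ∧
    ∀ k : ℕ,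
      {l : List ℕ | l.length = n ∧ IsAscSeq l ∧ ¬ Contains101 l ∧ ascList l = k}.ncard
        = n.choose (k + 1) * n.choose k / n := by
  constructor
  · have hset : {l : List ℕ | l.length = n ∧ IsAscSeq l ∧ ¬ Contains101 l}
        = ⋃ k ∈ Finset.range n, S12.ASet n k := by
      ext l
      simp only [Set.mem_setOf_eq, Set.mem_iUnion, Finset.mem_coe, Finset.mem_range,
        S12.ASet]
      constructor
      · rintro ⟨h1, h2, h3⟩
        have h4 := S12.ascList_le l
        rcases h4 with h4 | h4
        · exact ⟨ascList l, by omega, h1, ⟨h2, h3⟩, rfl⟩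
        · exact absurd h4 h2.1
      · rintro ⟨k, -, h1, ⟨h2, h3⟩, -⟩
        exact ⟨h1, h2, h3⟩
    rw [hset]
    rw [S12.ncard_biUnion _ _ (fun k => S12.ASet_finite n k) ?_]
    · exact S12.total_catalan n hn
    · intro a _ b _ hab
      rw [Set.disjoint_left]
      rintro s ⟨-, -, h1⟩ ⟨-, -, h2⟩
      exact hab (h1 ▸ h2 ▸ rfl)
  · intro k
    have hset2 : {l : List ℕ | l.length = n ∧ IsAscSeq l ∧ ¬ Contains101 l ∧ ascList l = k}
        = S12.ASet n k := by
      ext l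
      simp only [Set.mem_setOf_eq, S12.ASet, S12.Valid]
      tauto
    rw [hset2]
    have h := S12.key_count n k hn
    rw [← h, Nat.mul_div_cancel_left _ (by omega : 0 < n)]
end
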